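/- arXiv:2303.05450 — 6 statements merged into one kernel-verified Lean document; each statement's English description precedes it below -/
import Mathlib

section
/- Let b : [0,∞) → ℝ be continuously differentiable with linear growth (there exist M, m > 0 with b(t) ≤ M + m·t for all t ≥ 0), and let f : [0,∞) → ℝ be continuous, integrable, and strictly positive on (0,∞). Then for every fixed t ≥ 0, ε > 0 and n ∈ ℕ, lim_{c→∞} [∫_t^∞ e^{-c²s/2 + c·b(s)} sⁿ f(s) ds] / [∫_t^{t+ε} e^{-c²s/2 + c·b(s)} sⁿ f(s) ds] = 1. -/
open MeasureTheory Real Filter Set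

lemma aux_pow_le_factorial_mul_exp {s : ℝ} (hs : 0 ≤ s) (n : ℕ) :
    s ^ n ≤ (n.factorial : ℝ) * Real.exp s := by
  have h1 : s ^ n / (n.factorial : ℝ) ≤ Real.exp s :=
    le_trans (Finset.single_le_sum (f := fun i => s ^ i / (i.factorial : ℝ))
      (fun i _ => by positivity) (Finset.self_mem_range_succ n))
      (Real.sum_le_exp_of_nonneg hs (n + 1))
  have hn : (0:ℝ) < (n.factorial : ℝ) := by positivity
  calc s ^ n = s ^ n / (n.factorial : ℝ) * (n.factorial : ℝ) := by field_simp
    _ ≤ Real.exp s * (n.factorial : ℝ) := mul_le_mul_of_nonneg_right h1 hn.le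
    _ = (n.factorial : ℝ) * Real.exp s := mul_comm _ _

lemma aux_quad_atBot (a L C : ℝ) (ha : a < 0) :
    Tendsto (fun c : ℝ => a * c ^ 2 + L * c + C) atTop atBot := by
  have h1 : Tendsto (fun c : ℝ => a * c + L) atTop atBot :=
    tendsto_atBot_add_const_right _ L (tendsto_id.const_mul_atTop_of_neg ha)
  have h2 : Tendsto (fun c : ℝ => c * (a * c + L)) atTop atBot :=
    tendsto_id.atTop_mul_atBot₀ h1
  have h3 := tendsto_atBot_add_const_right _ C h2
  refine h3.congr fun c => by ring

/-- For a continuously differentiable boundary `b` with linear growth and a continuous,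
integrable, strictly positive density `f`, the ratio
`I^f_{[t,∞)}(n)(c) / I^f_{[t,t+ε]}(n)(c)` tends to `1` as `c → ∞`. -/
theorem ratio_tendsto_one (b f : ℝ → ℝ) (M m t ε : ℝ) (n : ℕ)
    (hb : ContDiffOn ℝ 1 b (Ici 0))
    (hM : 0 < M) (hm : 0 < m) (hgrowth : ∀ s ≥ (0 : ℝ), b s ≤ M + m * s)
    (hfc : ContinuousOn f (Ici 0)) (hfint : IntegrableOn f (Ici 0))
    (hfpos : ∀ s > (0 : ℝ), 0 < f s)
    (ht : 0 ≤ t) (hε : 0 < ε) :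
    Tendsto (fun c =>
        (∫ s in Ici t, Real.exp (-c ^ 2 * s / 2 + c * b s) * s ^ n * f s) /
        (∫ s in Icc t (t + ε), Real.exp (-c ^ 2 * s / 2 + c * b s) * s ^ n * f s))
      atTop (nhds 1) := by
  have hbc : ContinuousOn b (Ici 0) := hb.continuousOn
  -- basic facts about the subinterval [a₁, a₂]
  set a₁ : ℝ := t + ε / 4 with ha₁def
  set a₂ : ℝ := t + ε / 2 with ha₂def
  have ha₁pos : 0 < a₁ := by simp only [ha₁def]; linarith
  have ha₁₂ : a₁ ≤ a₂ := by simp only [ha₁def, ha₂def]; linarith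
  have hsub0 : Icc a₁ a₂ ⊆ Ici (0:ℝ) := fun s hs => le_trans ha₁pos.le hs.1
  have hsubW : Icc a₁ a₂ ⊆ Icc t (t + ε) := by
    apply Icc_subset_Icc <;> simp only [ha₁def, ha₂def] <;> linarith
  -- nonnegativity of f on [0, ∞)
  have hf0 : ∀ s : ℝ, 0 ≤ s → 0 ≤ f s := by
    intro s hs
    rcases eq_or_lt_of_le hs with h | h
    · have htd : Tendsto f (nhdsWithin (0:ℝ) (Ioi 0)) (nhds (f 0)) :=
        (hfc 0 self_mem_Ici).mono_left (nhdsWithin_mono _ Ioi_subset_Ici_self)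
      have hev : ∀ᶠ x in nhdsWithin (0:ℝ) (Ioi 0), 0 ≤ f x :=
        eventually_mem_nhdsWithin.mono fun x hx => (hfpos x hx).le
      exact h ▸ ge_of_tendsto htd hev
    · exact (hfpos s h).le
  -- minimizers on [a₁, a₂]
  obtain ⟨sB, hsBmem, hsB⟩ :=
    isCompact_Icc.exists_isMinOn (nonempty_Icc.2 ha₁₂) (hbc.mono hsub0)
  set B := b sB with hBdef
  obtain ⟨sK, hsKmem, hsK⟩ :=
    isCompact_Icc.exists_isMinOn (s := Icc a₁ a₂) (f := fun s => s ^ n * f s)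
      (nonempty_Icc.2 ha₁₂)
      (((continuous_pow n).continuousOn).mul (hfc.mono hsub0))
  set K := sK ^ n * f sK with hKdef
  have hsKpos : 0 < sK := lt_of_lt_of_le ha₁pos hsKmem.1
  have hKpos : 0 < K := mul_pos (pow_pos hsKpos n) (hfpos sK hsKpos)
  set F : ℝ := ∫ s in Ici (0:ℝ), |f s| with hFdef
  have hFnn : 0 ≤ F := integral_nonneg fun s => abs_nonneg _
  -- abbreviations
  clear_value a₁ a₂ B K F
  set g : ℝ → ℝ → ℝ := fun c s => Real.exp (-c ^ 2 * s / 2 + c * b s) * s ^ n * f s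
    with hgdef
  -- pointwise bound
  have hpt : ∀ c : ℝ, 0 ≤ c → ∀ s : ℝ, 0 ≤ s →
      Real.exp (-c ^ 2 * s / 2 + c * b s) * s ^ n ≤
        (n.factorial : ℝ) * Real.exp (c * M) *
          Real.exp ((m * c + 1 - c ^ 2 / 2) * s) := by
    intro c hc s hs
    calc Real.exp (-c ^ 2 * s / 2 + c * b s) * s ^ n
        ≤ Real.exp (-c ^ 2 * s / 2 + c * (M + m * s)) *
            ((n.factorial : ℝ) * Real.exp s) := by
          apply mul_le_mul _ (aux_pow_le_factorial_mul_exp hs n)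
            (pow_nonneg hs n) (Real.exp_pos _).le
          apply Real.exp_le_exp.2
          have := hgrowth s hs
          nlinarith
      _ = (n.factorial : ℝ) *
            (Real.exp (-c ^ 2 * s / 2 + c * (M + m * s)) * Real.exp s) := by ring
      _ = (n.factorial : ℝ) *
            Real.exp ((-c ^ 2 * s / 2 + c * (M + m * s)) + s) := by
          rw [← Real.exp_add]
      _ = (n.factorial : ℝ) *
            Real.exp (c * M + (m * c + 1 - c ^ 2 / 2) * s) := by
          congr 1; ring
      _ = (n.factorial : ℝ) * Real.exp (c * M) *
            Real.exp ((m * c + 1 - c ^ 2 / 2) * s) := by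
          rw [Real.exp_add]; ring
  -- continuity / measurability
  have hgc : ∀ c : ℝ, ContinuousOn (g c) (Ici 0) := by
    intro c
    exact ((((continuousOn_const.mul continuousOn_id).div_const 2).add
        (continuousOn_const.mul hbc)).rexp.mul
        ((continuous_pow n).continuousOn)).mul hfc
  -- integrability for large c
  have hint : ∀ c : ℝ, 0 ≤ c → m * c + 1 ≤ c ^ 2 / 2 →
      IntegrableOn (g c) (Ici 0) := by
    intro c hc hcq
    apply Integrable.mono (hfint.norm.const_mul ((n.factorial : ℝ) * Real.exp (c * M)))
      (((hgc c).aestronglyMeasurable measurableSet_Ici))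
    filter_upwards [ae_restrict_mem measurableSet_Ici] with s hs
    have hs0 : (0:ℝ) ≤ s := hs
    have h1 : Real.exp (-c ^ 2 * s / 2 + c * b s) * s ^ n ≤
        (n.factorial : ℝ) * Real.exp (c * M) := by
      refine le_trans (hpt c hc s hs0) ?_
      have : Real.exp ((m * c + 1 - c ^ 2 / 2) * s) ≤ 1 := by
        rw [Real.exp_le_one_iff]
        apply mul_nonpos_of_nonpos_of_nonneg _ hs0
        linarith
      exact mul_le_of_le_one_right (by positivity) this
    have hgnn : 0 ≤ Real.exp (-c ^ 2 * s / 2 + c * b s) * s ^ n :=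
      mul_nonneg (Real.exp_pos _).le (pow_nonneg hs0 n)
    calc ‖g c s‖ = Real.exp (-c ^ 2 * s / 2 + c * b s) * s ^ n * |f s| := by
          simp only [hgdef, norm_eq_abs, abs_mul]
          rw [abs_of_nonneg (Real.exp_pos _).le, abs_of_nonneg (pow_nonneg hs0 n)]
      _ ≤ (n.factorial : ℝ) * Real.exp (c * M) * |f s| :=
          mul_le_mul_of_nonneg_right h1 (abs_nonneg _)
      _ ≤ ‖(n.factorial : ℝ) * Real.exp (c * M) * ‖f s‖‖ := by
          rw [norm_eq_abs]
          exact le_abs_self _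
  -- tail nonneg
  have hTnn : ∀ c : ℝ, 0 ≤ ∫ s in Ici (t + ε), g c s := by
    intro c
    apply setIntegral_nonneg measurableSet_Ici
    intro s hs
    have hs0 : (0:ℝ) ≤ s := le_trans (by linarith) hs
    exact mul_nonneg (mul_nonneg (Real.exp_pos _).le (pow_nonneg hs0 n)) (hf0 s hs0)
  -- tail upper bound
  have hTle : ∀ c : ℝ, 0 ≤ c → m * c + 1 ≤ c ^ 2 / 2 →
      (∫ s in Ici (t + ε), g c s) ≤
        (n.factorial : ℝ) * Real.exp (c * M) *
          Real.exp ((m * c + 1 - c ^ 2 / 2) * (t + ε)) * F := by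
    intro c hc hcq
    have hsub : Ici (t + ε) ⊆ Ici (0:ℝ) := Ici_subset_Ici.2 (by linarith)
    calc (∫ s in Ici (t + ε), g c s)
        ≤ ∫ s in Ici (t + ε),
            (n.factorial : ℝ) * Real.exp (c * M) *
              Real.exp ((m * c + 1 - c ^ 2 / 2) * (t + ε)) * |f s| := by
          have hconst : IntegrableOn (fun s => (n.factorial : ℝ) * Real.exp (c * M) *
              Real.exp ((m * c + 1 - c ^ 2 / 2) * (t + ε)) * |f s|) (Ici 0) volume :=
            hfint.norm.const_mul _
          apply setIntegral_mono_on ((hint c hc hcq).mono_set hsub)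
            (hconst.mono_set hsub) measurableSet_Ici
          intro s hs
          have hs0 : (0:ℝ) ≤ s := hsub hs
          have hfs : 0 ≤ f s := hf0 s hs0
          calc g c s = Real.exp (-c ^ 2 * s / 2 + c * b s) * s ^ n * f s := rfl
            _ ≤ (n.factorial : ℝ) * Real.exp (c * M) *
                  Real.exp ((m * c + 1 - c ^ 2 / 2) * s) * f s :=
                mul_le_mul_of_nonneg_right (hpt c hc s hs0) hfs
            _ ≤ (n.factorial : ℝ) * Real.exp (c * M) *
                  Real.exp ((m * c + 1 - c ^ 2 / 2) * (t + ε)) * f s := by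
                apply mul_le_mul_of_nonneg_right _ hfs
                apply mul_le_mul_of_nonneg_left _ (by positivity)
                exact Real.exp_le_exp.2 (mul_le_mul_of_nonpos_left hs (by linarith))
            _ ≤ _ := mul_le_mul_of_nonneg_left (le_abs_self _) (by positivity)
      _ = (n.factorial : ℝ) * Real.exp (c * M) *
            Real.exp ((m * c + 1 - c ^ 2 / 2) * (t + ε)) *
            ∫ s in Ici (t + ε), |f s| := integral_const_mul _ _
      _ ≤ _ := by
          apply mul_le_mul_of_nonneg_left _ (by positivity)
          rw [hFdef]
          exact setIntegral_mono_set hfint.norm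
            (ae_of_all _ fun s => abs_nonneg _)
            (HasSubset.Subset.eventuallyLE hsub)
  -- window lower bound
  have hWlb : ∀ c : ℝ, 0 ≤ c → m * c + 1 ≤ c ^ 2 / 2 →
      Real.exp (-c ^ 2 * a₂ / 2 + c * B) * (K * (ε / 4)) ≤
        ∫ s in Icc t (t + ε), g c s := by
    intro c hc hcq
    have hintW : IntegrableOn (g c) (Icc t (t + ε)) :=
      (hint c hc hcq).mono_set (fun s hs => le_trans ht hs.1)
    have h1 : (∫ s in Icc a₁ a₂, g c s) ≤ ∫ s in Icc t (t + ε), g c s := by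
      apply setIntegral_mono_set hintW ?_ (HasSubset.Subset.eventuallyLE hsubW)
      filter_upwards [ae_restrict_mem measurableSet_Icc] with s hs
      have hs0 : (0:ℝ) ≤ s := le_trans ht hs.1
      exact mul_nonneg (mul_nonneg (Real.exp_pos _).le (pow_nonneg hs0 n)) (hf0 s hs0)
    refine le_trans ?_ h1
    have h2 : ∀ s ∈ Icc a₁ a₂,
        Real.exp (-c ^ 2 * a₂ / 2 + c * B) * K ≤ g c s := by
      intro s hs
      have hbs : B ≤ b s := hBdef ▸ hsB hs
      have hKs : K ≤ s ^ n * f s := hKdef ▸ hsK hs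
      have hexp : Real.exp (-c ^ 2 * a₂ / 2 + c * B) ≤
          Real.exp (-c ^ 2 * s / 2 + c * b s) := by
        apply Real.exp_le_exp.2
        have h3 : -c ^ 2 * a₂ / 2 ≤ -c ^ 2 * s / 2 := by
          have h5 : c ^ 2 * s ≤ c ^ 2 * a₂ := mul_le_mul_of_nonneg_left hs.2 (sq_nonneg c)
          linarith
        have h4 : c * B ≤ c * b s := mul_le_mul_of_nonneg_left hbs hc
        linarith
      calc Real.exp (-c ^ 2 * a₂ / 2 + c * B) * K
          ≤ Real.exp (-c ^ 2 * s / 2 + c * b s) * (s ^ n * f s) :=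
            mul_le_mul hexp hKs hKpos.le (Real.exp_pos _).le
        _ = g c s := by show _ = _ * _ * _; ring
    calc Real.exp (-c ^ 2 * a₂ / 2 + c * B) * (K * (ε / 4))
        = (∫ _ in Icc a₁ a₂, Real.exp (-c ^ 2 * a₂ / 2 + c * B) * K) := by
          rw [setIntegral_const, Real.volume_real_Icc, smul_eq_mul,
            max_eq_left (by linarith)]
          have h5 : a₂ - a₁ = ε / 4 := by rw [ha₁def, ha₂def]; ring
          rw [h5]; ring
      _ ≤ _ := setIntegral_mono_on (integrableOn_const (by
            rw [Real.volume_Icc]; exact ENNReal.ofReal_ne_top))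
            ((hint c hc hcq).mono_set hsub0) measurableSet_Icc h2
  have hWpos : ∀ c : ℝ, 0 ≤ c → m * c + 1 ≤ c ^ 2 / 2 →
      0 < ∫ s in Icc t (t + ε), g c s := fun c hc hcq =>
    lt_of_lt_of_le (mul_pos (Real.exp_pos _) (mul_pos hKpos (by linarith)))
      (hWlb c hc hcq)
  -- splitting
  have hsplit : ∀ c : ℝ, 0 ≤ c → m * c + 1 ≤ c ^ 2 / 2 →
      (∫ s in Ici t, g c s) =
        (∫ s in Icc t (t + ε), g c s) + ∫ s in Ici (t + ε), g c s := by
    intro c hc hcq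
    have hI := hint c hc hcq
    have h1 : Ici t = Ico t (t + ε) ∪ Ici (t + ε) :=
      (Ico_union_Ici_eq_Ici (by linarith)).symm
    rw [h1, setIntegral_union (disjoint_left.2 fun x hx hx' => hx.2.not_ge hx')
      measurableSet_Ici (hI.mono_set fun s hs => le_trans ht hs.1)
      (hI.mono_set (Ici_subset_Ici.2 (by linarith))),
      setIntegral_congr_set Ico_ae_eq_Icc]
  have hc₀ : ∀ c : ℝ, 2 * m + 2 ≤ c → 0 ≤ c ∧ m * c + 1 ≤ c ^ 2 / 2 := by
    intro c hc
    refine ⟨by linarith, by nlinarith⟩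
  -- the bound function tends to 0
  set A : ℝ := (n.factorial : ℝ) * F / (K * (ε / 4)) with hAdef
  have hRtend : Tendsto (fun c : ℝ =>
      A * Real.exp ((-(ε/4)) * c ^ 2 + (M + m * (t + ε) - B) * c + (t + ε)))
      atTop (nhds 0) := by
    have h1 := Real.tendsto_exp_atBot.comp
      (aux_quad_atBot (-(ε/4)) (M + m * (t + ε) - B) (t + ε) (by linarith))
    simpa using h1.const_mul A
  have hDL : ∀ c : ℝ,
      ((n.factorial : ℝ) * Real.exp (c * M) *
        Real.exp ((m * c + 1 - c ^ 2 / 2) * (t + ε)) * F) /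
      (Real.exp (-c ^ 2 * a₂ / 2 + c * B) * (K * (ε / 4))) =
      A * Real.exp ((-(ε/4)) * c ^ 2 + (M + m * (t + ε) - B) * c + (t + ε)) := by
    intro c
    have hε4 : K * (ε / 4) ≠ 0 := (mul_pos hKpos (by linarith : (0:ℝ) < ε / 4)).ne'
    have key : Real.exp (c * M) * Real.exp ((m * c + 1 - c ^ 2 / 2) * (t + ε)) =
        Real.exp (-c ^ 2 * a₂ / 2 + c * B) *
          Real.exp ((-(ε/4)) * c ^ 2 + (M + m * (t + ε) - B) * c + (t + ε)) := by
      rw [← Real.exp_add, ← Real.exp_add]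
      congr 1
      rw [ha₂def]; ring
    rw [div_eq_iff (mul_pos (Real.exp_pos _)
      (mul_pos hKpos (by linarith : (0:ℝ) < ε / 4))).ne']
    symm
    calc A * Real.exp ((-(ε/4)) * c ^ 2 + (M + m * (t + ε) - B) * c + (t + ε)) *
          (Real.exp (-c ^ 2 * a₂ / 2 + c * B) * (K * (ε / 4)))
        = (A * (K * (ε / 4))) * (Real.exp (-c ^ 2 * a₂ / 2 + c * B) *
            Real.exp ((-(ε/4)) * c ^ 2 + (M + m * (t + ε) - B) * c + (t + ε))) := by
          ring
      _ = ((n.factorial : ℝ) * F) *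
            (Real.exp (c * M) * Real.exp ((m * c + 1 - c ^ 2 / 2) * (t + ε))) := by
          rw [hAdef, div_mul_cancel₀ _ hε4, ← key]
      _ = (n.factorial : ℝ) * Real.exp (c * M) *
            Real.exp ((m * c + 1 - c ^ 2 / 2) * (t + ε)) * F := by ring
  -- squeeze
  have hTW : Tendsto (fun c : ℝ =>
      (∫ s in Ici (t + ε), g c s) / (∫ s in Icc t (t + ε), g c s))
      atTop (nhds 0) := by
    apply tendsto_of_tendsto_of_tendsto_of_le_of_le'
      (tendsto_const_nhds (x := (0:ℝ))) hRtend
    · filter_upwards [eventually_ge_atTop (2 * m + 2)] with c hc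
      obtain ⟨hc0, hcq⟩ := hc₀ c hc
      exact div_nonneg (hTnn c) (hWpos c hc0 hcq).le
    · filter_upwards [eventually_ge_atTop (2 * m + 2)] with c hc
      obtain ⟨hc0, hcq⟩ := hc₀ c hc
      calc (∫ s in Ici (t + ε), g c s) / (∫ s in Icc t (t + ε), g c s)
          ≤ ((n.factorial : ℝ) * Real.exp (c * M) *
              Real.exp ((m * c + 1 - c ^ 2 / 2) * (t + ε)) * F) /
            (Real.exp (-c ^ 2 * a₂ / 2 + c * B) * (K * (ε / 4))) :=
            div_le_div₀ (mul_nonneg (by positivity) hFnn) (hTle c hc0 hcq)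
              (mul_pos (Real.exp_pos _) (mul_pos hKpos (by linarith)))
              (hWlb c hc0 hcq)
        _ = _ := hDL c
  have hfinal : Tendsto (fun c : ℝ =>
      1 + (∫ s in Ici (t + ε), g c s) / (∫ s in Icc t (t + ε), g c s))
      atTop (nhds 1) := by
    simpa using (tendsto_const_nhds (x := (1:ℝ))).add hTW
  apply hfinal.congr'
  filter_upwards [eventually_ge_atTop (2 * m + 2)] with c hc
  obtain ⟨hc0, hcq⟩ := hc₀ c hc
  have hW := hWpos c hc0 hcq
  show 1 + _ = (∫ s in Ici t, g c s) / (∫ s in Icc t (t + ε), g c s)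
  rw [hsplit c hc0 hcq, add_div, div_self hW.ne']
end

section
/- Let b : [0,∞) → ℝ be continuously differentiable with linear growth (there exist M, m > 0 with b(t) ≤ M + m·t for all t ≥ 0), and let f, f̃ : [0,∞) → ℝ be continuous integrable functions with f(t) ≠ f̃(t) for a fixed t ≥ 0. Then for every ε > 0 and n ∈ ℕ, lim_{c→∞} [∫_t^∞ e^{-c²s/2 + c·b(s)} sⁿ (f(s) - f̃(s)) ds] / [∫_t^{t+ε} e^{-c²s/2 + c·b(s)} sⁿ (f(s) - f̃(s)) ds] = 1 (in particular the denominator is nonzero for all sufficiently large c). -/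
open MeasureTheory Real Filter Set

lemma w_le (b : ℝ → ℝ) (M m : ℝ) (n : ℕ) (hgrowth : ∀ s ≥ (0:ℝ), b s ≤ M + m * s)
    (c s : ℝ) (hc : 0 ≤ c) (hs : 0 ≤ s) :
    Real.exp (-c ^ 2 * s / 2 + c * b s) * s ^ n
      ≤ Real.exp (c * M) * Real.exp (-(s * (c ^ 2 / 2 - c * m - n))) := by
  have hsn : s ^ n ≤ Real.exp (n * s) := by
    rw [Real.exp_nat_mul]
    exact pow_le_pow_left₀ hs (by linarith [Real.add_one_le_exp s]) n
  have hb : c * b s ≤ c * (M + m * s) := by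
    exact mul_le_mul_of_nonneg_left (hgrowth s hs) hc
  calc Real.exp (-c ^ 2 * s / 2 + c * b s) * s ^ n
      ≤ Real.exp (-c ^ 2 * s / 2 + c * (M + m * s)) * Real.exp (n * s) := by
        apply mul_le_mul (Real.exp_le_exp.2 (by linarith)) hsn (by positivity) (le_of_lt (Real.exp_pos _))
    _ = Real.exp (c * M) * Real.exp (-(s * (c ^ 2 / 2 - c * m - n))) := by
        rw [← Real.exp_add, ← Real.exp_add]; ring_nf

lemma integrable_w (b g : ℝ → ℝ) (m : ℝ) (n : ℕ)
    (hbc : ContinuousOn b (Ici 0)) (hgc : ContinuousOn g (Ici 0))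
    (hgint : IntegrableOn g (Ici 0)) (M : ℝ) (hgrowth : ∀ s ≥ (0:ℝ), b s ≤ M + m * s)
    (c : ℝ) (hc : 0 ≤ c) (hβ : 0 ≤ c ^ 2 / 2 - c * m - n)
    (S : Set ℝ) (hS : MeasurableSet S) (hSsub : S ⊆ Ici 0) :
    IntegrableOn (fun s => Real.exp (-c ^ 2 * s / 2 + c * b s) * s ^ n * g s) S := by
  have hwc : ContinuousOn (fun s => Real.exp (-c ^ 2 * s / 2 + c * b s) * s ^ n * g s) (Ici 0) := by
    fun_prop
  have hmeas : AEStronglyMeasurable (fun s => Real.exp (-c ^ 2 * s / 2 + c * b s) * s ^ n * g s)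
      (volume.restrict S) :=
    ((hwc.mono hSsub).aestronglyMeasurable hS)
  have hint : IntegrableOn (fun s => Real.exp (c * M) * |g s|) S := by
    apply Integrable.const_mul
    exact ((hgint.mono_set hSsub).norm)
  refine Integrable.mono hint hmeas ?_
  rw [ae_restrict_iff' hS]
  filter_upwards with s hsS
  have hs0 : (0:ℝ) ≤ s := hSsub hsS
  have h1 := w_le b M m n hgrowth c s hc hs0
  rw [Real.norm_eq_abs, Real.norm_eq_abs, abs_mul, abs_of_nonneg (by positivity : (0:ℝ) ≤ Real.exp (-c ^ 2 * s / 2 + c * b s) * s ^ n), abs_of_nonneg (by positivity : (0:ℝ) ≤ Real.exp (c*M) * |g s|)]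
  have h2 : Real.exp (-(s * (c ^ 2 / 2 - c * m - n))) ≤ 1 := by
    apply Real.exp_le_one_iff.2; nlinarith
  calc Real.exp (-c ^ 2 * s / 2 + c * b s) * s ^ n * |g s|
      ≤ Real.exp (c * M) * Real.exp (-(s * (c ^ 2 / 2 - c * m - n))) * |g s| := by
        apply mul_le_mul_of_nonneg_right h1 (abs_nonneg _)
    _ ≤ Real.exp (c * M) * 1 * |g s| := by
        apply mul_le_mul_of_nonneg_right _ (abs_nonneg _)
        exact mul_le_mul_of_nonneg_left h2 (le_of_lt (Real.exp_pos _))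
    _ = Real.exp (c * M) * |g s| := by ring

set_option maxHeartbeats 1000000 in
lemma integral_w_le (b g : ℝ → ℝ) (M m : ℝ) (n : ℕ)
    (hbc : ContinuousOn b (Ici 0)) (hgc : ContinuousOn g (Ici 0))
    (hgint : IntegrableOn g (Ici 0)) (hgrowth : ∀ s ≥ (0:ℝ), b s ≤ M + m * s)
    (c : ℝ) (hc : 0 ≤ c) (hβ : 0 ≤ c ^ 2 / 2 - c * m - n)
    (S : Set ℝ) (S₀ : ℝ) (hS : MeasurableSet S) (hS0 : 0 ≤ S₀) (hSsub : S ⊆ Ici S₀) :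
    |∫ s in S, Real.exp (-c ^ 2 * s / 2 + c * b s) * s ^ n * g s|
      ≤ Real.exp (c * M) * Real.exp (-(S₀ * (c ^ 2 / 2 - c * m - n))) * ∫ s in Ici 0, |g s| := by
  set C := Real.exp (c * M) * Real.exp (-(S₀ * (c ^ 2 / 2 - c * m - n))) with hC
  have hC0 : 0 ≤ C := by positivity
  have hSsub0 : S ⊆ Ici (0:ℝ) := fun x hx => le_trans hS0 (hSsub hx)
  have hintw := integrable_w b g m n hbc hgc hgint M hgrowth c hc hβ S hS hSsub0
  have habs : IntegrableOn (fun s => |g s|) (Ici 0) := hgint.norm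
  have habsS : IntegrableOn (fun s => C * |g s|) S :=
    ((habs.mono_set hSsub0).const_mul C)
  calc |∫ s in S, Real.exp (-c ^ 2 * s / 2 + c * b s) * s ^ n * g s|
      ≤ ∫ s in S, |Real.exp (-c ^ 2 * s / 2 + c * b s) * s ^ n * g s| := by
        rw [← Real.norm_eq_abs]
        refine le_trans (norm_integral_le_integral_norm _) ?_
        simp only [Real.norm_eq_abs]
        exact le_rfl
    _ ≤ ∫ s in S, C * |g s| := by
        apply setIntegral_mono_on hintw.norm habsS hS
        intro s hsS
        have hs0 : (0:ℝ) ≤ s := hSsub0 hsS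
        have hsS0 : S₀ ≤ s := hSsub hsS
        rw [Real.norm_eq_abs, abs_mul, abs_of_nonneg (by positivity : (0:ℝ) ≤ Real.exp (-c ^ 2 * s / 2 + c * b s) * s ^ n)]
        have h1 := w_le b M m n hgrowth c s hc hs0
        have h2 : Real.exp (-(s * (c ^ 2 / 2 - c * m - n))) ≤ Real.exp (-(S₀ * (c ^ 2 / 2 - c * m - n))) := by
          apply Real.exp_le_exp.2
          have := mul_le_mul_of_nonneg_right hsS0 hβ
          linarith
        calc Real.exp (-c ^ 2 * s / 2 + c * b s) * s ^ n * |g s|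
            ≤ Real.exp (c * M) * Real.exp (-(s * (c ^ 2 / 2 - c * m - n))) * |g s| :=
              mul_le_mul_of_nonneg_right h1 (abs_nonneg _)
          _ ≤ C * |g s| := by
              apply mul_le_mul_of_nonneg_right _ (abs_nonneg _)
              exact mul_le_mul_of_nonneg_left h2 (le_of_lt (Real.exp_pos _))
    _ = C * ∫ s in S, |g s| := integral_const_mul C _
    _ ≤ C * ∫ s in Ici 0, |g s| := by
        apply mul_le_mul_of_nonneg_left _ hC0
        apply setIntegral_mono_set habs
        · filter_upwards with s using abs_nonneg _
        · exact HasSubset.Subset.eventuallyLE hSsub0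

set_option maxHeartbeats 1000000 in
lemma lower_bound (b g : ℝ → ℝ) (M m t ε δ B : ℝ) (n : ℕ)
    (hbc : ContinuousOn b (Ici 0)) (hgc : ContinuousOn g (Ici 0))
    (hgint : IntegrableOn g (Ici 0)) (hgrowth : ∀ s ≥ (0:ℝ), b s ≤ M + m * s)
    (ht : 0 ≤ t) (hδ : 0 < δ) (hδε : δ ≤ ε) (hgt : 0 < g t)
    (hgδ : ∀ s ∈ Icc t (t + δ), g t / 2 ≤ g s)
    (hB : ∀ s ∈ Icc (0:ℝ) (t + ε), -B ≤ b s)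
    (c : ℝ) (hc : 0 ≤ c) (hβ : 0 ≤ c ^ 2 / 2 - c * m - n) :
    δ / 4 * ((t + δ / 4) ^ n * (g t / 2)) * Real.exp (-(c ^ 2 * (t + δ / 2)) / 2 - c * B)
      ≤ ∫ s in Icc t (t + δ), Real.exp (-c ^ 2 * s / 2 + c * b s) * s ^ n * g s := by
  have hsub : Icc (t + δ / 4) (t + δ / 2) ⊆ Icc t (t + δ) := by
    apply Icc_subset_Icc <;> linarith
  have hsub0 : Icc t (t + δ) ⊆ Ici (0:ℝ) := fun x hx => le_trans ht hx.1
  have hint1 := integrable_w b g m n hbc hgc hgint M hgrowth c hc hβ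
    (Icc t (t + δ)) measurableSet_Icc hsub0
  have hint2 : IntegrableOn (fun s => Real.exp (-c ^ 2 * s / 2 + c * b s) * s ^ n * g s)
      (Icc (t + δ / 4) (t + δ / 2)) := hint1.mono_set hsub
  set K := (t + δ / 4) ^ n * (g t / 2) * Real.exp (-(c ^ 2 * (t + δ / 2)) / 2 - c * B) with hK
  have step1 : ∫ s in Icc (t + δ / 4) (t + δ / 2), K
      ≤ ∫ s in Icc (t + δ / 4) (t + δ / 2), Real.exp (-c ^ 2 * s / 2 + c * b s) * s ^ n * g s := by
    apply setIntegral_mono_on (integrableOn_const (C := K) measure_Icc_lt_top.ne) hint2 measurableSet_Icc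
    intro s hs
    have hs1 : t + δ / 4 ≤ s := hs.1
    have hs2 : s ≤ t + δ / 2 := hs.2
    have hs0 : (0:ℝ) ≤ s := by linarith
    have hsI : s ∈ Icc t (t + δ) := hsub hs
    have hgs : g t / 2 ≤ g s := hgδ s hsI
    have hbs : -B ≤ b s := hB s ⟨hs0, by linarith⟩
    have hexp : Real.exp (-(c ^ 2 * (t + δ / 2)) / 2 - c * B) ≤ Real.exp (-c ^ 2 * s / 2 + c * b s) := by
      apply Real.exp_le_exp.2
      have h1 : -c ^ 2 * s / 2 ≥ -(c ^ 2 * (t + δ / 2)) / 2 := by nlinarith [sq_nonneg c]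
      have h2 : c * b s ≥ -(c * B) := by nlinarith
      linarith
    have hpow : (t + δ / 4) ^ n ≤ s ^ n := pow_le_pow_left₀ (by linarith) hs1 n
    calc K ≤ Real.exp (-c ^ 2 * s / 2 + c * b s) * s ^ n * (g t / 2) := by
          rw [hK]
          have e1 : (t + δ / 4) ^ n * (g t / 2) * Real.exp (-(c ^ 2 * (t + δ / 2)) / 2 - c * B)
              = Real.exp (-(c ^ 2 * (t + δ / 2)) / 2 - c * B) * (t + δ / 4) ^ n * (g t / 2) := by ring
          rw [e1]
          have hgt2 : (0:ℝ) ≤ g t / 2 := by linarith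
          apply mul_le_mul_of_nonneg_right _ hgt2
          apply mul_le_mul hexp hpow (by positivity) (le_of_lt (Real.exp_pos _))
      _ ≤ Real.exp (-c ^ 2 * s / 2 + c * b s) * s ^ n * g s := by
          apply mul_le_mul_of_nonneg_left hgs (by positivity)
  have hvol : ∫ s in Icc (t + δ / 4) (t + δ / 2), K = δ / 4 * K := by
    rw [setIntegral_const, measureReal_def, Real.volume_Icc, smul_eq_mul]
    congr 1
    rw [ENNReal.toReal_ofReal (by linarith)]
    ring
  have step2 : ∫ s in Icc (t + δ / 4) (t + δ / 2), Real.exp (-c ^ 2 * s / 2 + c * b s) * s ^ n * g s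
      ≤ ∫ s in Icc t (t + δ), Real.exp (-c ^ 2 * s / 2 + c * b s) * s ^ n * g s := by
    apply setIntegral_mono_set hint1
    · filter_upwards [ae_restrict_mem measurableSet_Icc] with s hs
      have hs0 : (0:ℝ) ≤ s := le_trans ht hs.1
      have hgs : g t / 2 ≤ g s := hgδ s hs
      exact mul_nonneg (mul_nonneg (Real.exp_pos _).le (pow_nonneg hs0 n)) (by linarith)
    · exact HasSubset.Subset.eventuallyLE hsub
  calc δ / 4 * ((t + δ / 4) ^ n * (g t / 2)) * Real.exp (-(c ^ 2 * (t + δ / 2)) / 2 - c * B)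
      = δ / 4 * K := by rw [hK]; ring
    _ = ∫ s in Icc (t + δ / 4) (t + δ / 2), K := hvol.symm
    _ ≤ _ := le_trans step1 step2

lemma tendsto_exp_quad (a e d : ℝ) (ha : 0 < a) :
    Tendsto (fun c => Real.exp (-a * c ^ 2 + e * c + d)) atTop (nhds 0) := by
  apply Real.tendsto_exp_atBot.comp
  have heq : (fun c : ℝ => -a * c ^ 2 + e * c + d) = fun c => c * (-a * c + e) + d := by
    funext c; ring
  rw [heq]
  apply tendsto_atBot_add_const_right
  apply Tendsto.atTop_mul_atBot₀ tendsto_id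
  apply tendsto_atBot_add_const_right
  exact Tendsto.const_mul_atTop_of_neg (by linarith) tendsto_id

set_option maxHeartbeats 2000000 in
lemma aux_ratio (b g : ℝ → ℝ) (M m t ε : ℝ) (n : ℕ)
    (hbc : ContinuousOn b (Ici 0))
    (hM : 0 < M) (hm : 0 < m) (hgrowth : ∀ s ≥ (0 : ℝ), b s ≤ M + m * s)
    (hgc : ContinuousOn g (Ici 0)) (hgint : IntegrableOn g (Ici 0))
    (ht : 0 ≤ t) (hgt : 0 < g t) (hε : 0 < ε) :
    (∀ᶠ c in atTop,
        (∫ s in Icc t (t + ε), Real.exp (-c ^ 2 * s / 2 + c * b s) * s ^ n * g s) ≠ 0) ∧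
    Tendsto (fun c =>
        (∫ s in Ici t, Real.exp (-c ^ 2 * s / 2 + c * b s) * s ^ n * g s) /
        (∫ s in Icc t (t + ε), Real.exp (-c ^ 2 * s / 2 + c * b s) * s ^ n * g s))
      atTop (nhds 1) := by
  -- choose δ
  obtain ⟨δ, hδ, hδε, hgδ⟩ : ∃ δ > 0, δ ≤ ε ∧ ∀ s ∈ Icc t (t + δ), g t / 2 ≤ g s := by
    have hcw : ContinuousWithinAt g (Ici 0) t := hgc t (mem_Ici.2 ht)
    have h1 : ∀ᶠ s in nhdsWithin t (Ici 0), g t / 2 < g s := hcw (Ioi_mem_nhds (by linarith))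
    rw [eventually_nhdsWithin_iff, Metric.eventually_nhds_iff] at h1
    obtain ⟨r, hr, h⟩ := h1
    refine ⟨min (r / 2) ε, by positivity, min_le_right _ _, ?_⟩
    intro s hs
    have hs0 : s ∈ Ici (0:ℝ) := le_trans ht hs.1
    have hd : dist s t < r := by
      rw [Real.dist_eq, abs_of_nonneg (by linarith [hs.1])]
      have h2 := hs.2
      have h3 : s - t ≤ min (r / 2) ε := by linarith
      calc s - t ≤ r / 2 := le_trans h3 (min_le_left _ _)
        _ < r := by linarith
    exact le_of_lt (h hd hs0)
  -- bound for b on the compact set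
  obtain ⟨B, hB⟩ : ∃ B, ∀ s ∈ Icc (0:ℝ) (t + ε), -B ≤ b s := by
    obtain ⟨B, hB⟩ := (isCompact_Icc : IsCompact (Icc (0:ℝ) (t + ε))).exists_bound_of_continuousOn
      (hbc.mono (fun x hx => hx.1))
    exact ⟨B, fun s hs => neg_le_of_abs_le (by simpa [Real.norm_eq_abs] using hB s hs)⟩
  set c₀ : ℝ := 2 * m + 2 * n + 2 with hc₀
  have hc₀pos : 0 < c₀ := by positivity
  have hβ : ∀ c, c₀ ≤ c → 0 ≤ c ^ 2 / 2 - c * m - n := by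
    intro c hc
    have h1 : (0:ℝ) ≤ n := Nat.cast_nonneg n
    nlinarith [hc, hm.le]
  have hcnn : ∀ c, c₀ ≤ c → (0:ℝ) ≤ c := fun c hc => le_trans hc₀pos.le hc
  set G := ∫ s in Ici (0:ℝ), |g s| with hG
  have hG0 : 0 ≤ G := setIntegral_nonneg measurableSet_Ici (fun s _ => abs_nonneg _)
  set K₃ : ℝ := δ / 4 * ((t + δ / 4) ^ n * (g t / 2)) with hK₃
  have htδ : (0:ℝ) < t + δ / 4 := by linarith
  have hK₃pos : 0 < K₃ := by
    apply mul_pos (by linarith) (mul_pos (pow_pos htδ n) (by linarith))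
  set L : ℝ → ℝ := fun c => K₃ * Real.exp (-(c ^ 2 * (t + δ / 2)) / 2 - c * B) with hL
  have hLpos : ∀ c, 0 < L c := fun c => mul_pos hK₃pos (Real.exp_pos _)
  -- abbreviations
  set w : ℝ → ℝ → ℝ := fun c s => Real.exp (-c ^ 2 * s / 2 + c * b s) * s ^ n with hw
  have htε : t ≤ t + ε := by linarith
  have htδ' : t ≤ t + δ := by linarith
  have hδε' : t + δ ≤ t + ε := by linarith
  -- integrabilities and splits for c ≥ c₀
  have hIcc0 : Icc t (t + ε) ⊆ Ici (0:ℝ) := fun x hx => le_trans ht hx.1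
  have hIci0 : Ici t ⊆ Ici (0:ℝ) := fun x hx => le_trans ht hx
  have hIoi0 : Ioi (t + ε) ⊆ Ici (0:ℝ) := fun x hx => le_trans (by linarith : (0:ℝ) ≤ t + ε) (le_of_lt hx)
  have hIccδ0 : Icc t (t + δ) ⊆ Ici (0:ℝ) := fun x hx => le_trans ht hx.1
  have hIoc0 : Ioc (t + δ) (t + ε) ⊆ Ici (0:ℝ) := fun x hx => le_trans (by linarith) (le_of_lt hx.1)
  have hsplitN : ∀ c, c₀ ≤ c →
      (∫ s in Ici t, w c s * g s)
        = (∫ s in Icc t (t + ε), w c s * g s) + ∫ s in Ioi (t + ε), w c s * g s := by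
    intro c hc
    rw [← Icc_union_Ioi_eq_Ici htε]
    apply setIntegral_union _ measurableSet_Ioi
    · exact integrable_w b g m n hbc hgc hgint M hgrowth c (hcnn c hc) (hβ c hc) _ measurableSet_Icc hIcc0
    · exact integrable_w b g m n hbc hgc hgint M hgrowth c (hcnn c hc) (hβ c hc) _ measurableSet_Ioi hIoi0
    · rw [Set.disjoint_left]; intro x hx hx'; exact absurd hx.2 (not_le.2 hx')
  have hsplitD : ∀ c, c₀ ≤ c →
      (∫ s in Icc t (t + ε), w c s * g s)
        = (∫ s in Icc t (t + δ), w c s * g s) + ∫ s in Ioc (t + δ) (t + ε), w c s * g s := by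
    intro c hc
    rw [← Icc_union_Ioc_eq_Icc htδ' hδε']
    apply setIntegral_union _ measurableSet_Ioc
    · exact integrable_w b g m n hbc hgc hgint M hgrowth c (hcnn c hc) (hβ c hc) _ measurableSet_Icc hIccδ0
    · exact integrable_w b g m n hbc hgc hgint M hgrowth c (hcnn c hc) (hβ c hc) _ measurableSet_Ioc hIoc0
    · rw [Set.disjoint_left]; intro x hx hx'; exact absurd hx.2 (not_le.2 hx'.1)
  -- bounds
  have hT : ∀ c, c₀ ≤ c → |∫ s in Ioi (t + ε), w c s * g s|
      ≤ Real.exp (c * M) * Real.exp (-((t + ε) * (c ^ 2 / 2 - c * m - n))) * G := by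
    intro c hc
    exact integral_w_le b g M m n hbc hgc hgint hgrowth c (hcnn c hc) (hβ c hc)
      (Ioi (t + ε)) (t + ε) measurableSet_Ioi (by linarith) Ioi_subset_Ici_self
  have hE : ∀ c, c₀ ≤ c → |∫ s in Ioc (t + δ) (t + ε), w c s * g s|
      ≤ Real.exp (c * M) * Real.exp (-((t + δ) * (c ^ 2 / 2 - c * m - n))) * G := by
    intro c hc
    exact integral_w_le b g M m n hbc hgc hgint hgrowth c (hcnn c hc) (hβ c hc)
      (Ioc (t + δ) (t + ε)) (t + δ) measurableSet_Ioc (by linarith) (fun x hx => le_of_lt hx.1)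
  have hA : ∀ c, c₀ ≤ c → L c ≤ ∫ s in Icc t (t + δ), w c s * g s := by
    intro c hc
    exact lower_bound b g M m t ε δ B n hbc hgc hgint hgrowth ht hδ hδε hgt hgδ hB c
      (hcnn c hc) (hβ c hc)
  -- the two comparison quantities
  set ψ : ℝ → ℝ := fun c => 2 * G / K₃ *
      Real.exp (-(δ / 4) * c ^ 2 + (M + B + (t + δ) * m) * c + (t + δ) * n) with hψdef
  set φ : ℝ → ℝ := fun c => 2 * G / K₃ *
      Real.exp (-((ε - δ / 2) / 2) * c ^ 2 + (M + B + (t + ε) * m) * c + (t + ε) * n) with hφdef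
  have hψ0 : Tendsto ψ atTop (nhds 0) := by
    have h := (tendsto_exp_quad (δ / 4) (M + B + (t + δ) * m) ((t + δ) * n) (by linarith)).const_mul
      (2 * G / K₃)
    rw [mul_zero] at h
    exact h
  have hφ0 : Tendsto φ atTop (nhds 0) := by
    have h := (tendsto_exp_quad ((ε - δ / 2) / 2) (M + B + (t + ε) * m) ((t + ε) * n)
      (by linarith)).const_mul (2 * G / K₃)
    rw [mul_zero] at h
    exact h
  -- key identity: the E-bound equals (L c / 2) * ψ c, the T-bound equals (L c / 2) * φ c
  have hKne : K₃ ≠ 0 := ne_of_gt hK₃pos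
  have hEid : ∀ c, Real.exp (c * M) * Real.exp (-((t + δ) * (c ^ 2 / 2 - c * m - n))) * G
      = L c / 2 * ψ c := by
    intro c
    simp only [hL, hψdef]
    have hexp : c * M + -((t + δ) * (c ^ 2 / 2 - c * m - n))
        = (-(c ^ 2 * (t + δ / 2)) / 2 - c * B)
          + (-(δ / 4) * c ^ 2 + (M + B + (t + δ) * m) * c + (t + δ) * n) := by ring
    calc Real.exp (c * M) * Real.exp (-((t + δ) * (c ^ 2 / 2 - c * m - n))) * G
        = G * Real.exp (c * M + -((t + δ) * (c ^ 2 / 2 - c * m - n))) := by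
          rw [Real.exp_add]; ring
      _ = G * (Real.exp (-(c ^ 2 * (t + δ / 2)) / 2 - c * B)
            * Real.exp (-(δ / 4) * c ^ 2 + (M + B + (t + δ) * m) * c + (t + δ) * n)) := by
          rw [← Real.exp_add, hexp]
      _ = K₃ * Real.exp (-(c ^ 2 * (t + δ / 2)) / 2 - c * B) / 2
            * (2 * G / K₃ * Real.exp (-(δ / 4) * c ^ 2 + (M + B + (t + δ) * m) * c + (t + δ) * n)) := by
          field_simp
  have hTid : ∀ c, Real.exp (c * M) * Real.exp (-((t + ε) * (c ^ 2 / 2 - c * m - n))) * G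
      = L c / 2 * φ c := by
    intro c
    simp only [hL, hφdef]
    have hexp : c * M + -((t + ε) * (c ^ 2 / 2 - c * m - n))
        = (-(c ^ 2 * (t + δ / 2)) / 2 - c * B)
          + (-((ε - δ / 2) / 2) * c ^ 2 + (M + B + (t + ε) * m) * c + (t + ε) * n) := by ring
    calc Real.exp (c * M) * Real.exp (-((t + ε) * (c ^ 2 / 2 - c * m - n))) * G
        = G * Real.exp (c * M + -((t + ε) * (c ^ 2 / 2 - c * m - n))) := by
          rw [Real.exp_add]; ring
      _ = G * (Real.exp (-(c ^ 2 * (t + δ / 2)) / 2 - c * B)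
            * Real.exp (-((ε - δ / 2) / 2) * c ^ 2 + (M + B + (t + ε) * m) * c + (t + ε) * n)) := by
          rw [← Real.exp_add, hexp]
      _ = K₃ * Real.exp (-(c ^ 2 * (t + δ / 2)) / 2 - c * B) / 2
            * (2 * G / K₃ * Real.exp (-((ε - δ / 2) / 2) * c ^ 2 + (M + B + (t + ε) * m) * c + (t + ε) * n)) := by
          field_simp
  -- eventually, the denominator is at least L c / 2
  have hψev : ∀ᶠ c in atTop, ψ c ≤ 1 := by
    filter_upwards [hψ0 (Iio_mem_nhds (by norm_num : (0:ℝ) < 1))] with c hc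
    exact le_of_lt hc
  have hDlb : ∀ᶠ c in atTop, L c / 2 ≤ ∫ s in Icc t (t + ε), w c s * g s := by
    filter_upwards [eventually_ge_atTop c₀, hψev] with c hcc hcψ
    have hEc := hE c hcc
    have hEc2 : |∫ s in Ioc (t + δ) (t + ε), w c s * g s| ≤ L c / 2 := by
      calc |∫ s in Ioc (t + δ) (t + ε), w c s * g s|
          ≤ Real.exp (c * M) * Real.exp (-((t + δ) * (c ^ 2 / 2 - c * m - n))) * G := hEc
        _ = L c / 2 * ψ c := hEid c
        _ ≤ L c / 2 * 1 := by
            apply mul_le_mul_of_nonneg_left hcψ (by linarith [hLpos c])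
        _ = L c / 2 := mul_one _
    have hAc := hA c hcc
    rw [hsplitD c hcc]
    have := abs_le.1 hEc2
    linarith [this.1]
  have hDpos : ∀ᶠ c in atTop, 0 < ∫ s in Icc t (t + ε), w c s * g s := by
    filter_upwards [hDlb] with c hc
    exact lt_of_lt_of_le (by linarith [hLpos c]) hc
  constructor
  · filter_upwards [hDpos] with c hc
    exact ne_of_gt hc
  -- the ratio
  have hTD0 : Tendsto (fun c => (∫ s in Ioi (t + ε), w c s * g s) /
      (∫ s in Icc t (t + ε), w c s * g s)) atTop (nhds 0) := by
    apply squeeze_zero_norm' _ hφ0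
    filter_upwards [eventually_ge_atTop c₀, hDlb] with c hcc hlb
    have hDpos' : 0 < ∫ s in Icc t (t + ε), w c s * g s := lt_of_lt_of_le (by linarith [hLpos c]) hlb
    rw [Real.norm_eq_abs, abs_div, abs_of_pos hDpos']
    calc |∫ s in Ioi (t + ε), w c s * g s| / (∫ s in Icc t (t + ε), w c s * g s)
        ≤ (Real.exp (c * M) * Real.exp (-((t + ε) * (c ^ 2 / 2 - c * m - n))) * G) / (L c / 2) := by
          apply div_le_div₀ (mul_nonneg (by positivity) hG0) (hT c hcc) (by linarith [hLpos c]) hlb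
      _ = φ c := by
          rw [hTid c]
          exact mul_div_cancel_left₀ _ (ne_of_gt (by linarith [hLpos c] : (0:ℝ) < L c / 2))
  have heq : ∀ᶠ c in atTop, (∫ s in Ici t, w c s * g s) / (∫ s in Icc t (t + ε), w c s * g s)
      = 1 + (∫ s in Ioi (t + ε), w c s * g s) / (∫ s in Icc t (t + ε), w c s * g s) := by
    filter_upwards [eventually_ge_atTop c₀, hDpos] with c hcc hp
    rw [hsplitN c hcc, add_div, div_self (ne_of_gt hp)]
  have : Tendsto (fun c => 1 + (∫ s in Ioi (t + ε), w c s * g s) /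
      (∫ s in Icc t (t + ε), w c s * g s)) atTop (nhds 1) := by
    have := tendsto_const_nhds (x := (1:ℝ)) (f := atTop).add hTD0
    simpa using this
  exact Tendsto.congr' (heq.mono (fun c hc => hc.symm)) this

/-- For a continuously differentiable boundary `b` with linear growth and continuous,
integrable `f, f̃` with `f t ≠ f̃ t`, the ratio `D_{[t,∞)}(n)(c) / D_{[t,t+ε]}(n)(c)`
tends to `1` as `c → ∞`; in particular the denominator is eventually nonzero. -/
theorem difference_ratio_tendsto_one (b f ftil : ℝ → ℝ) (M m t ε : ℝ) (n : ℕ)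
    (hb : ContDiffOn ℝ 1 b (Ici 0))
    (hM : 0 < M) (hm : 0 < m) (hgrowth : ∀ s ≥ (0 : ℝ), b s ≤ M + m * s)
    (hfc : ContinuousOn f (Ici 0)) (hfint : IntegrableOn f (Ici 0))
    (hftc : ContinuousOn ftil (Ici 0)) (hftint : IntegrableOn ftil (Ici 0))
    (ht : 0 ≤ t) (hne : f t ≠ ftil t) (hε : 0 < ε) :
    (∀ᶠ c in atTop,
        (∫ s in Icc t (t + ε),
          Real.exp (-c ^ 2 * s / 2 + c * b s) * s ^ n * (f s - ftil s)) ≠ 0) ∧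
    Tendsto (fun c =>
        (∫ s in Ici t, Real.exp (-c ^ 2 * s / 2 + c * b s) * s ^ n * (f s - ftil s)) /
        (∫ s in Icc t (t + ε),
          Real.exp (-c ^ 2 * s / 2 + c * b s) * s ^ n * (f s - ftil s)))
      atTop (nhds 1) := by
  have hbc : ContinuousOn b (Ici 0) := hb.continuousOn
  rcases lt_or_gt_of_ne (sub_ne_zero.2 hne) with hlt | hgt
  · -- f t < ftil t : apply with g = ftil - f
    have h := aux_ratio b (fun s => ftil s - f s) M m t ε n hbc hM hm hgrowth
      (hftc.sub hfc) (hftint.sub hfint) ht (by simpa using by linarith : 0 < ftil t - f t) hε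
    have hkey : ∀ (S : Set ℝ) (c : ℝ),
        (∫ s in S, Real.exp (-c ^ 2 * s / 2 + c * b s) * s ^ n * (ftil s - f s))
          = -∫ s in S, Real.exp (-c ^ 2 * s / 2 + c * b s) * s ^ n * (f s - ftil s) := by
      intro S c
      rw [← integral_neg]
      congr 1
      funext s
      ring
    constructor
    · filter_upwards [h.1] with c hc
      intro h0
      apply hc
      rw [hkey, h0, neg_zero]
    · have h2 := h.2
      have : (fun c =>
          (∫ s in Ici t, Real.exp (-c ^ 2 * s / 2 + c * b s) * s ^ n * (ftil s - f s)) /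
          (∫ s in Icc t (t + ε), Real.exp (-c ^ 2 * s / 2 + c * b s) * s ^ n * (ftil s - f s)))
          = (fun c =>
          (∫ s in Ici t, Real.exp (-c ^ 2 * s / 2 + c * b s) * s ^ n * (f s - ftil s)) /
          (∫ s in Icc t (t + ε), Real.exp (-c ^ 2 * s / 2 + c * b s) * s ^ n * (f s - ftil s))) := by
        funext c
        rw [hkey, hkey, neg_div_neg_eq]
      rwa [this] at h2
  · -- ftil t < f t
    have h := aux_ratio b (fun s => f s - ftil s) M m t ε n hbc hM hm hgrowth
      (hfc.sub hftc) (hfint.sub hftint) ht (by simpa using hgt) hε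
    exact h
end

section
/- Let b : [0,∞) → ℝ be continuously differentiable with linear growth (there exist M, m > 0 with b(t) ≤ M + m·t for all t ≥ 0), let f, f̃ : [0,∞) → ℝ be continuous integrable functions, and suppose that for a fixed t ≥ 0 and δ > 0 one has f(s) > f̃(s) for all s ∈ [t, t+δ]. Then for every n ∈ ℕ the quantity D_{[t,t+δ]}(n)(c) := ∫_t^{t+δ} e^{-c²s/2 + c·b(s)} sⁿ (f(s) - f̃(s)) ds is strictly positive, and lim_{c→∞} |∫_{t+δ}^∞ e^{-c²s/2 + c·b(s)} sⁿ (f(s) - f̃(s)) ds| / D_{[t,t+δ]}(n)(c) = 0. -/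
open MeasureTheory Real Filter Set

/-- If `f > f̃` on `[t, t+δ]`, then `D_{[t,t+δ]}(n)(c)` is strictly positive and
`|D_{[t+δ,∞)}(n)(c)| / D_{[t,t+δ]}(n)(c) → 0` as `c → ∞`. -/
theorem tail_difference_ratio_tendsto_zero (b f ftil : ℝ → ℝ) (M m t δ : ℝ) (n : ℕ)
    (hb : ContDiffOn ℝ 1 b (Ici 0))
    (hM : 0 < M) (hm : 0 < m) (hgrowth : ∀ s ≥ (0 : ℝ), b s ≤ M + m * s)
    (hfc : ContinuousOn f (Ici 0)) (hfint : IntegrableOn f (Ici 0))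
    (hftc : ContinuousOn ftil (Ici 0)) (hftint : IntegrableOn ftil (Ici 0))
    (ht : 0 ≤ t) (hδ : 0 < δ)
    (hgt : ∀ s ∈ Icc t (t + δ), ftil s < f s) :
    (∀ c : ℝ, 0 < ∫ s in Icc t (t + δ),
        Real.exp (-c ^ 2 * s / 2 + c * b s) * s ^ n * (f s - ftil s)) ∧
    Tendsto (fun c =>
        |∫ s in Ici (t + δ), Real.exp (-c ^ 2 * s / 2 + c * b s) * s ^ n * (f s - ftil s)| /
        (∫ s in Icc t (t + δ),
          Real.exp (-c ^ 2 * s / 2 + c * b s) * s ^ n * (f s - ftil s)))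
      atTop (nhds 0) := by
  set g : ℝ → ℝ → ℝ := fun c s => Real.exp (-c ^ 2 * s / 2 + c * b s) * s ^ n * (f s - ftil s)
    with hgdef
  have hsub : Icc t (t + δ) ⊆ Ici (0:ℝ) := fun s hs => le_trans ht hs.1
  have hgcont : ∀ c, ContinuousOn (g c) (Ici (0:ℝ)) := by
    intro c
    apply ContinuousOn.mul
    · apply ContinuousOn.mul
      · apply ContinuousOn.rexp
        exact ((continuousOn_const.mul continuousOn_id).div_const 2).add
          (continuousOn_const.mul hb.continuousOn)
      · exact (continuousOn_pow n).mono (subset_univ _)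
    · exact hfc.sub hftc
  -- Part 1: positivity of the denominator
  have hpos : ∀ c : ℝ, 0 < ∫ s in Icc t (t + δ), g c s := by
    intro c
    rw [MeasureTheory.integral_Icc_eq_integral_Ioc,
      ← intervalIntegral.integral_of_le (by linarith : t ≤ t + δ)]
    apply intervalIntegral.intervalIntegral_pos_of_pos_on
    · exact ((hgcont c).mono
        (by rw [uIcc_of_le (by linarith : t ≤ t + δ)]; exact hsub)).intervalIntegrable
    · intro s hs
      have hs0 : 0 < s := lt_of_le_of_lt ht hs.1
      exact mul_pos (mul_pos (Real.exp_pos _) (pow_pos hs0 n))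
        (sub_pos.mpr (hgt s ⟨hs.1.le, hs.2.le⟩))
    · linarith
  refine ⟨hpos, ?_⟩
  -- constants
  obtain ⟨x₀, hx₀, hBmin⟩ := isCompact_Icc.exists_isMinOn (nonempty_Icc.mpr (by linarith))
    (hb.continuousOn.mono hsub)
  set Bv : ℝ := b x₀ with hBv
  obtain ⟨x₁, hx₁, hεmin⟩ := isCompact_Icc.exists_isMinOn (nonempty_Icc.mpr (by linarith))
    ((hfc.sub hftc).mono hsub)
  set ε : ℝ := f x₁ - ftil x₁ with hε
  have hεpos : 0 < ε := sub_pos.mpr (hgt x₁ hx₁)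
  set I : ℝ := ∫ s in Ici (t + δ), |f s - ftil s| with hI
  have hIint : IntegrableOn (fun s => |f s - ftil s|) (Ici (t + δ)) := by
    have h1 : IntegrableOn (fun s => f s - ftil s) (Ici 0) := hfint.sub hftint
    exact (h1.mono_set (Ici_subset_Ici.mpr (by linarith))).abs
  have hInn : 0 ≤ I := setIntegral_nonneg measurableSet_Ici (fun s _ => abs_nonneg _)
  -- integrability of g c on Icc t (t+δ)
  have hgint : ∀ c : ℝ, IntegrableOn (g c) (Icc t (t + δ)) := fun c =>
    ((hgcont c).mono hsub).integrableOn_Icc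
  have hgnn : ∀ c : ℝ, ∀ s ∈ Icc t (t + δ), 0 ≤ g c s := by
    intro c s hs
    have hs0 : 0 ≤ s := le_trans ht hs.1
    exact mul_nonneg (mul_nonneg (Real.exp_pos _).le (pow_nonneg hs0 n))
      (sub_nonneg.mpr (hgt s hs).le)
  -- denominator lower bound for c ≥ 0
  set L : ℝ → ℝ := fun c =>
    Real.exp (-c ^ 2 * (t + δ / 2) / 2 + c * Bv) * (δ / 4) ^ n * ε * (δ / 4) with hL
  have hLpos : ∀ c : ℝ, 0 < L c := fun c =>
    mul_pos (mul_pos (mul_pos (Real.exp_pos _) (pow_pos (by linarith) n)) hεpos) (by linarith)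
  have hDlb : ∀ c : ℝ, 0 ≤ c → L c ≤ ∫ s in Icc t (t + δ), g c s := by
    intro c hc0
    have hsubset : Icc (t + δ / 4) (t + δ / 2) ⊆ Icc t (t + δ) :=
      Icc_subset_Icc (by linarith) (by linarith)
    have step1 : ∫ s in Icc (t + δ / 4) (t + δ / 2), g c s ≤ ∫ s in Icc t (t + δ), g c s := by
      apply MeasureTheory.setIntegral_mono_set (hgint c)
      · exact (ae_restrict_iff' measurableSet_Icc).mpr (ae_of_all _ (hgnn c))
      · exact HasSubset.Subset.eventuallyLE hsubset
    have step2 : (Real.exp (-c ^ 2 * (t + δ / 2) / 2 + c * Bv) * (δ / 4) ^ n * ε)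
        * ((t + δ / 2) - (t + δ / 4)) ≤ ∫ s in Icc (t + δ / 4) (t + δ / 2), g c s := by
      have hK : ∀ s ∈ Icc (t + δ / 4) (t + δ / 2),
          Real.exp (-c ^ 2 * (t + δ / 2) / 2 + c * Bv) * (δ / 4) ^ n * ε ≤ g c s := by
        intro s hs
        have hsmem : s ∈ Icc t (t + δ) := hsubset hs
        have hE : Real.exp (-c ^ 2 * (t + δ / 2) / 2 + c * Bv)
            ≤ Real.exp (-c ^ 2 * s / 2 + c * b s) := by
          apply Real.exp_le_exp.mpr
          have h1 : c * Bv ≤ c * b s := mul_le_mul_of_nonneg_left (hBmin hsmem) hc0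
          have h2 : c ^ 2 * s ≤ c ^ 2 * (t + δ / 2) :=
            mul_le_mul_of_nonneg_left hs.2 (sq_nonneg c)
          linarith
        have hP : (δ / 4) ^ n ≤ s ^ n :=
          pow_le_pow_left₀ (by linarith) (by linarith [hs.1]) n
        have hD : ε ≤ f s - ftil s := hεmin hsmem
        calc Real.exp (-c ^ 2 * (t + δ / 2) / 2 + c * Bv) * (δ / 4) ^ n * ε
            ≤ Real.exp (-c ^ 2 * s / 2 + c * b s) * s ^ n * ε := by
              apply mul_le_mul_of_nonneg_right _ hεpos.le
              exact mul_le_mul hE hP (by positivity) (Real.exp_pos _).le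
          _ ≤ Real.exp (-c ^ 2 * s / 2 + c * b s) * s ^ n * (f s - ftil s) := by
              apply mul_le_mul_of_nonneg_left hD
              have hs0 : (0:ℝ) ≤ s := le_trans ht hsmem.1
              positivity
      have hint' : IntegrableOn (g c) (Icc (t + δ / 4) (t + δ / 2)) :=
        (hgint c).mono_set hsubset
      have := MeasureTheory.setIntegral_ge_of_const_le
        (measurableSet_Icc (a := t + δ / 4) (b := t + δ / 2))
        (by rw [Real.volume_Icc]; exact ENNReal.ofReal_ne_top) hK hint'
      rw [Real.volume_real_Icc_of_le (by linarith), smul_eq_mul] at this; linarith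
    have harith : (t + δ / 2) - (t + δ / 4) = δ / 4 := by ring
    calc L c = (Real.exp (-c ^ 2 * (t + δ / 2) / 2 + c * Bv) * (δ / 4) ^ n * ε)
        * ((t + δ / 2) - (t + δ / 4)) := by rw [harith]
      _ ≤ _ := le_trans step2 step1
  -- numerator upper bound for suitable c
  set K : ℝ → ℝ := fun c => Real.exp (c * M + (t + δ) * (c * m + n - c ^ 2 / 2)) with hK
  have hNub : ∀ c : ℝ, 0 ≤ c → c * m + n ≤ c ^ 2 / 2 →
      |∫ s in Ici (t + δ), g c s| ≤ K c * I := by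
    intro c hc0 hc2
    have hcoef : c * m + (n:ℝ) - c ^ 2 / 2 ≤ 0 := by linarith
    have hbound : ∀ s ∈ Ici (t + δ), ‖g c s‖ ≤ K c * |f s - ftil s| := by
      intro s hs
      have hs0 : (0:ℝ) < s := lt_of_lt_of_le (by linarith) hs
      have hnorm : ‖g c s‖ = Real.exp (-c ^ 2 * s / 2 + c * b s) * s ^ n * |f s - ftil s| := by
        rw [hgdef]
        simp only [Real.norm_eq_abs, abs_mul]
        rw [abs_of_pos (Real.exp_pos _), abs_of_nonneg (pow_nonneg hs0.le n)]
      rw [hnorm]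
      apply mul_le_mul_of_nonneg_right _ (abs_nonneg _)
      have h1 : s ^ n ≤ Real.exp (n * s) := by
        calc s ^ n ≤ (Real.exp s) ^ n :=
              pow_le_pow_left₀ hs0.le (by linarith [Real.add_one_le_exp s]) n
          _ = Real.exp (n * s) := by rw [← Real.exp_nat_mul]
      have h2 : c * b s ≤ c * (M + m * s) :=
        mul_le_mul_of_nonneg_left (hgrowth s hs0.le) hc0
      calc Real.exp (-c ^ 2 * s / 2 + c * b s) * s ^ n
          ≤ Real.exp (-c ^ 2 * s / 2 + c * (M + m * s)) * Real.exp (n * s) := by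
            apply mul_le_mul (Real.exp_le_exp.mpr (by linarith)) h1
              (pow_nonneg hs0.le n) (Real.exp_pos _).le
        _ = Real.exp (c * M + s * (c * m + n - c ^ 2 / 2)) := by
            rw [← Real.exp_add]; congr 1; ring
        _ ≤ K c := by
            apply Real.exp_le_exp.mpr
            have : s * (c * m + n - c ^ 2 / 2) ≤ (t + δ) * (c * m + n - c ^ 2 / 2) :=
              mul_le_mul_of_nonpos_right hs hcoef
            linarith
    calc |∫ s in Ici (t + δ), g c s| ≤ ∫ s in Ici (t + δ), ‖g c s‖ := by
          rw [← Real.norm_eq_abs]; exact norm_integral_le_integral_norm _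
      _ ≤ ∫ s in Ici (t + δ), K c * |f s - ftil s| := by
          apply MeasureTheory.integral_mono_of_nonneg
            (ae_of_all _ fun s => norm_nonneg _) (hIint.const_mul _)
          exact (ae_restrict_iff' measurableSet_Ici).mpr (ae_of_all _ hbound)
      _ = K c * I := by rw [hI, MeasureTheory.integral_const_mul]
  -- the dominating function
  set A : ℝ := M + m * (t + δ) - Bv with hA
  set φ : ℝ → ℝ := fun c =>
    I / ((δ / 4) ^ n * ε * (δ / 4)) * Real.exp (A * c + n * (t + δ) - δ / 4 * c ^ 2) with hφ
  have hφ0 : Tendsto φ atTop (nhds 0) := by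
    have h1 : Tendsto (fun c : ℝ => c * (δ / 4) - A) atTop atTop :=
      tendsto_atTop_add_const_right _ _ (Tendsto.atTop_mul_const (by linarith) tendsto_id)
    have h2 : Tendsto (fun c : ℝ => c * (c * (δ / 4) - A)) atTop atTop :=
      Tendsto.atTop_mul_atTop₀ tendsto_id h1
    have h3 : Tendsto (fun c : ℝ => A * c + n * (t + δ) - δ / 4 * c ^ 2) atTop atBot := by
      have h4 := tendsto_atBot_add_const_right atTop ((n : ℝ) * (t + δ))
        (tendsto_neg_atTop_atBot.comp h2)
      refine h4.congr fun c => ?_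
      simp only [Function.comp]; ring
    have h5 := Real.tendsto_exp_atBot.comp h3
    simpa using h5.const_mul (I / ((δ / 4) ^ n * ε * (δ / 4)))
  -- eventual comparison
  have hev : ∀ᶠ c in atTop, |∫ s in Ici (t + δ), g c s| / (∫ s in Icc t (t + δ), g c s) ≤ φ c := by
    filter_upwards [eventually_ge_atTop (max 1 (2 * m + 2 * n))] with c hc
    have hc1 : (1:ℝ) ≤ c := le_trans (le_max_left _ _) hc
    have hcmn : 2 * m + 2 * (n:ℝ) ≤ c := le_trans (le_max_right _ _) hc
    have hc0 : (0:ℝ) ≤ c := by linarith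
    have hc2 : c * m + (n:ℝ) ≤ c ^ 2 / 2 := by nlinarith [Nat.cast_nonneg (α := ℝ) n]
    have hnum := hNub c hc0 hc2
    have hden := hDlb c hc0
    have hratio : |∫ s in Ici (t + δ), g c s| / (∫ s in Icc t (t + δ), g c s)
        ≤ K c * I / L c :=
      div_le_div₀ (by positivity) hnum (hLpos c) hden
    refine le_trans hratio (le_of_eq ?_)
    have hsplit : K c * I / L c
        = (K c / Real.exp (-c ^ 2 * (t + δ / 2) / 2 + c * Bv))
          * (I / ((δ / 4) ^ n * ε * (δ / 4))) := by
      rw [div_mul_div_comm]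
      congr 1
      simp only [hL]
      ring
    have hexp : K c / Real.exp (-c ^ 2 * (t + δ / 2) / 2 + c * Bv)
        = Real.exp (A * c + n * (t + δ) - δ / 4 * c ^ 2) := by
      simp only [hK]
      rw [← Real.exp_sub]
      congr 1
      simp only [hA]
      ring
    rw [hsplit, hexp, hφ]
    ring
  have hev0 : ∀ᶠ c in atTop,
      0 ≤ |∫ s in Ici (t + δ), g c s| / (∫ s in Icc t (t + δ), g c s) :=
    Eventually.of_forall fun c => div_nonneg (abs_nonneg _) (hpos c).le
  exact squeeze_zero' hev0 hev hφ0
end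

section
/- Let b : [0,∞) → ℝ be continuous with linear growth (there exist M, m > 0 with b(t) ≤ M + m·t for all t ≥ 0), let f : [0,∞) → ℝ be continuous and integrable, and fix n ∈ ℕ. Then the function c ↦ ∫₀^∞ e^{-c²s/2 + c·b(s)} sⁿ f(s) ds is real-analytic on (2m + 2, ∞). -/
open MeasureTheory Real Filter Set

lemma fredholm_aux_pow_mul_exp_le (k : ℕ) {l s : ℝ} (hl : 0 < l) (hs : 0 ≤ s) :
    s ^ k * Real.exp (-(l * s)) ≤ k.factorial / l ^ k := by
  have hfac : (0:ℝ) < k.factorial := by positivity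
  have h1 : (l * s) ^ k / (k.factorial : ℝ) ≤ Real.exp (l * s) := by
    calc (l * s) ^ k / (k.factorial : ℝ)
        ≤ ∑ i ∈ Finset.range (k + 1), (l * s) ^ i / (i.factorial : ℝ) :=
          Finset.single_le_sum (f := fun i => (l * s) ^ i / (i.factorial : ℝ))
            (fun i _ => by positivity) (Finset.self_mem_range_succ k)
      _ ≤ Real.exp (l * s) := Real.sum_le_exp_of_nonneg (by positivity) _
  have h4 : l ^ k * s ^ k ≤ (k.factorial : ℝ) * Real.exp (l * s) := by
    rw [← mul_pow]
    have := (div_le_iff₀ hfac).mp h1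
    linarith [this]
  have h3 : (0:ℝ) < l ^ k := pow_pos hl k
  rw [le_div_iff₀ h3, Real.exp_neg]
  calc s ^ k * (Real.exp (l * s))⁻¹ * l ^ k
      = (l ^ k * s ^ k) * (Real.exp (l * s))⁻¹ := by ring
    _ ≤ ((k.factorial : ℝ) * Real.exp (l * s)) * (Real.exp (l * s))⁻¹ := by
        exact mul_le_mul_of_nonneg_right h4 (inv_nonneg.mpr (Real.exp_pos _).le)
    _ = (k.factorial : ℝ) := by field_simp

lemma fredholm_aux_neg_mul_exp_le {p x : ℝ} (hp : 0 < p) (hx : x ≤ 0) :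
    (-x) * Real.exp (p * x) ≤ 1 / p := by
  have h1 : p * (-x) ≤ Real.exp (p * (-x)) := by
    have := Real.add_one_le_exp (p * (-x))
    linarith
  have h2 : (-x) ≤ Real.exp (p * (-x)) / p := by
    rw [le_div_iff₀ hp]; linarith
  have h3 : Real.exp (p * x) = (Real.exp (p * (-x)))⁻¹ := by
    rw [← Real.exp_neg]; congr 1; ring
  rw [h3]
  calc (-x) * (Real.exp (p * (-x)))⁻¹
      ≤ (Real.exp (p * (-x)) / p) * (Real.exp (p * (-x)))⁻¹ :=
        mul_le_mul_of_nonneg_right h2 (inv_nonneg.mpr (Real.exp_pos _).le)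
    _ = 1 / p := by field_simp

set_option maxHeartbeats 1600000 in
/-- The Fredholm transform `c ↦ I^f(n)(c) = ∫₀^∞ e^{-c²s/2 + c b(s)} sⁿ f(s) ds`
is real-analytic on `(2m + 2, ∞)`. -/
theorem analyticOnNhd_fredholm_transform (b f : ℝ → ℝ) (M m : ℝ) (n : ℕ)
    (hb : ContinuousOn b (Ici 0))
    (hM : 0 < M) (hm : 0 < m) (hgrowth : ∀ s ≥ (0 : ℝ), b s ≤ M + m * s)
    (hfc : ContinuousOn f (Ici 0)) (hfint : IntegrableOn f (Ici 0)) :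
    AnalyticOnNhd ℝ
      (fun c : ℝ => ∫ s in Ioi (0 : ℝ),
        Real.exp (-c ^ 2 * s / 2 + c * b s) * s ^ n * f s)
      (Ioi (2 * m + 2)) := by
  classical
  -- the complex integrand and its `c`-derivative
  set G : ℂ → ℝ → ℂ := fun c s =>
    Complex.exp (-c ^ 2 * (s : ℂ) / 2 + c * (b s : ℂ)) * (s : ℂ) ^ n * (f s : ℂ) with hGdef
  set G' : ℂ → ℝ → ℂ := fun c s =>
    Complex.exp (-c ^ 2 * (s : ℂ) / 2 + c * (b s : ℂ)) * (-c * (s : ℂ) + (b s : ℂ))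
      * (s : ℂ) ^ n * (f s : ℂ) with hG'def
  set Fc : ℂ → ℂ := fun c => ∫ s in Ioi (0 : ℝ), G c s with hFcdef
  set U : Set ℂ := {c : ℂ | 0 < c.re ∧ 2 * m * c.re < c.re ^ 2 - c.im ^ 2} with hUdef
  have hUopen : IsOpen U := by
    rw [hUdef, setOf_and]
    exact (isOpen_lt continuous_const Complex.continuous_re).inter
      (isOpen_lt (by fun_prop) (by fun_prop))
  -- real part of the exponent
  have hre : ∀ (c : ℂ) (s : ℝ),
      (-c ^ 2 * (s : ℂ) / 2 + c * (b s : ℂ)).re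
        = -(c.re ^ 2 - c.im ^ 2) * s / 2 + c.re * b s := by
    intro c s
    simp [Complex.add_re, Complex.mul_re, Complex.div_re, Complex.normSq_apply, pow_two]
    ring
  -- measurability
  have hbC : ContinuousOn (fun s : ℝ => ((b s : ℂ))) (Ici 0) :=
    Complex.continuous_ofReal.comp_continuousOn hb
  have hfC : ContinuousOn (fun s : ℝ => ((f s : ℂ))) (Ici 0) :=
    Complex.continuous_ofReal.comp_continuousOn hfc
  have hexpcont : ∀ c : ℂ, ContinuousOn
      (fun s : ℝ => -c ^ 2 * (s : ℂ) / 2 + c * (b s : ℂ)) (Ici 0) := by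
    intro c
    exact ((continuousOn_const.mul Complex.continuous_ofReal.continuousOn).div_const 2).add
      (continuousOn_const.mul hbC)
  have hGcont : ∀ c : ℂ, ContinuousOn (G c) (Ici 0) := fun c =>
    ((Complex.continuous_exp.comp_continuousOn (hexpcont c)).mul
      (Complex.continuous_ofReal.continuousOn.pow n)).mul hfC
  have hG'cont : ∀ c : ℂ, ContinuousOn (G' c) (Ici 0) := fun c =>
    (((Complex.continuous_exp.comp_continuousOn (hexpcont c)).mul
      ((continuousOn_const.mul Complex.continuous_ofReal.continuousOn).add hbC)).mul
      (Complex.continuous_ofReal.continuousOn.pow n)).mul hfC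
  have hGmeas : ∀ c : ℂ, AEStronglyMeasurable (G c) (volume.restrict (Ioi 0)) := fun c =>
    ((hGcont c).mono Ioi_subset_Ici_self).aestronglyMeasurable measurableSet_Ioi
  have hG'meas : ∀ c : ℂ, AEStronglyMeasurable (G' c) (volume.restrict (Ioi 0)) := fun c =>
    ((hG'cont c).mono Ioi_subset_Ici_self).aestronglyMeasurable measurableSet_Ioi
  -- integrability of constant multiples of |f|
  have hintC : ∀ C' : ℝ, Integrable (fun s : ℝ => C' * |f s|) (volume.restrict (Ioi 0)) := by
    intro C'
    have h1 : IntegrableOn (fun s : ℝ => C' * |f s|) (Ici 0) := by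
      simpa [Real.norm_eq_abs, IntegrableOn] using (hfint.norm.const_mul C')
    exact h1.mono_set Ioi_subset_Ici_self
  -- derivative of the integrand in `c`
  have hderiv : ∀ (s : ℝ) (c : ℂ), HasDerivAt (fun c => G c s) (G' c s) c := by
    intro s c
    have h1 : HasDerivAt (fun c : ℂ => -c ^ 2 * (s : ℂ) / 2 + c * (b s : ℂ))
        (-c * (s : ℂ) + (b s : ℂ)) c := by
      have hA := (((hasDerivAt_pow 2 c).neg.mul_const ((s : ℂ))).div_const 2)
      have hB := (hasDerivAt_id c).mul_const ((b s : ℂ))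
      have := hA.add hB
      exact this.congr_deriv (by simp; ring)
    have h2 := (h1.cexp.mul_const ((s : ℂ) ^ n)).mul_const ((f s : ℂ))
    simpa only [hGdef, hG'def] using h2
  -- main step: `Fc` has a derivative at every point of `U`
  have hkey : ∀ c₀ ∈ U, HasDerivAt Fc (∫ s in Ioi (0 : ℝ), G' c₀ s) c₀ := by
    intro c₀ hc₀
    obtain ⟨ha, hκ0⟩ := hc₀
    set a : ℝ := c₀.re with hadef
    set t : ℝ := c₀.im with htdef
    set κ : ℝ := a ^ 2 - t ^ 2 - 2 * m * a with hκdef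
    have hκpos : 0 < κ := by rw [hκdef]; linarith
    have hX : 0 < a + |t| + m + 1 := by positivity
    set δ : ℝ := min (a / 2) (κ / (4 * (a + |t| + m + 1))) with hδdef
    have hδpos : 0 < δ := lt_min (by positivity) (by positivity)
    have hδa : δ ≤ a / 2 := min_le_left _ _
    have hδκ : 4 * (a + |t| + m + 1) * δ ≤ κ := by
      have h := min_le_right (a / 2) (κ / (4 * (a + |t| + m + 1)))
      rw [hδdef]
      calc 4 * (a + |t| + m + 1) * min (a / 2) (κ / (4 * (a + |t| + m + 1)))
          ≤ 4 * (a + |t| + m + 1) * (κ / (4 * (a + |t| + m + 1))) := by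
            apply mul_le_mul_of_nonneg_left h (by positivity)
        _ = κ := by field_simp
    have hκ4 : 0 < κ / 4 := by linarith
    have ha0 : (0:ℝ) < a := ha
    -- facts about points of the ball
    have hball : ∀ c ∈ Metric.ball c₀ δ,
        a / 2 ≤ c.re ∧ c.re ≤ a + δ ∧ κ / 2 ≤ c.re ^ 2 - c.im ^ 2 - 2 * m * c.re
          ∧ ‖c‖ ≤ ‖c₀‖ + δ := by
      intro c hc
      have hdist : ‖c - c₀‖ < δ := by
        rw [Metric.mem_ball, dist_eq_norm] at hc; exact hc
      have hre' : |c.re - a| ≤ δ := by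
        have h := Complex.abs_re_le_norm (c - c₀)
        rw [Complex.sub_re] at h
        exact le_trans h hdist.le
      have him' : |c.im - t| ≤ δ := by
        have h := Complex.abs_im_le_norm (c - c₀)
        rw [Complex.sub_im] at h
        exact le_trans h hdist.le
      rw [abs_le] at hre' him'
      have h1 : a / 2 ≤ c.re := by linarith [hre'.1]
      have h2 : c.re ≤ a + δ := by linarith [hre'.2]
      have him2 : |c.im| ≤ |t| + δ := by
        have : c.im = t + (c.im - t) := by ring
        rw [this]
        calc |t + (c.im - t)| ≤ |t| + |c.im - t| := abs_add_le _ _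
          _ ≤ |t| + δ := by have := abs_le.mpr him'; linarith
      have hresq : (a - δ) ^ 2 ≤ c.re ^ 2 :=
        pow_le_pow_left₀ (by linarith) (by linarith [hre'.1]) 2
      have himsq : c.im ^ 2 ≤ (|t| + δ) ^ 2 := by
        rw [← sq_abs c.im]
        exact pow_le_pow_left₀ (abs_nonneg _) him2 2
      have hnorm : ‖c‖ ≤ ‖c₀‖ + δ := by
        have h := norm_add_le c₀ (c - c₀)
        have h' : c₀ + (c - c₀) = c := by ring
        rw [h'] at h
        linarith [hdist.le]
      refine ⟨h1, h2, ?_, hnorm⟩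
      nlinarith [hresq, himsq, sq_abs t, mul_le_mul_of_nonneg_left h2 hm.le, hδκ, hδpos.le,
        abs_nonneg t]
    -- exponent bound on the ball
    have hEbound : ∀ c ∈ Metric.ball c₀ δ, ∀ s ∈ Ioi (0:ℝ),
        (-c ^ 2 * (s : ℂ) / 2 + c * (b s : ℂ)).re ≤ (a + δ) * M + -(κ / 4 * s) := by
      intro c hc s hs
      obtain ⟨h1, h2, h3, _⟩ := hball c hc
      have hs0 : (0:ℝ) < s := hs
      have hbs := hgrowth s hs0.le
      have hcre : 0 < c.re := by linarith
      rw [hre]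
      have p1 : c.re * b s ≤ c.re * (M + m * s) :=
        mul_le_mul_of_nonneg_left hbs hcre.le
      have p2 : (κ / 2) * s ≤ (c.re ^ 2 - c.im ^ 2 - 2 * m * c.re) * s :=
        mul_le_mul_of_nonneg_right h3 hs0.le
      have p3 : c.re * M ≤ (a + δ) * M := mul_le_mul_of_nonneg_right h2 hM.le
      nlinarith [p1, p2, p3]
    have hexpQ : ∀ c ∈ Metric.ball c₀ δ, ∀ s ∈ Ioi (0:ℝ),
        Real.exp ((-c ^ 2 * (s : ℂ) / 2 + c * (b s : ℂ)).re)
          ≤ Real.exp ((a + δ) * M) * Real.exp (-(κ / 4 * s)) := by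
      intro c hc s hs
      rw [← Real.exp_add]
      exact Real.exp_le_exp.mpr (hEbound c hc s hs)
    -- norm identities
    have hGnorm : ∀ (c : ℂ), ∀ s ∈ Ioi (0:ℝ),
        ‖G c s‖ = Real.exp ((-c ^ 2 * (s : ℂ) / 2 + c * (b s : ℂ)).re) * s ^ n * |f s| := by
      intro c s hs
      have hs0 : (0:ℝ) < s := hs
      simp [hGdef, map_mul, map_pow, Complex.norm_exp,
        Complex.norm_real, abs_of_pos hs0]
    have hG'norm : ∀ (c : ℂ), ∀ s ∈ Ioi (0:ℝ),
        ‖G' c s‖ = Real.exp ((-c ^ 2 * (s : ℂ) / 2 + c * (b s : ℂ)).re)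
          * ‖-c * (s : ℂ) + (b s : ℂ)‖ * s ^ n * |f s| := by
      intro c s hs
      have hs0 : (0:ℝ) < s := hs
      simp [hG'def, map_mul, map_pow, Complex.norm_exp,
        Complex.norm_real, abs_of_pos hs0]
    -- constants
    set C₂ : ℝ := Real.exp ((a + δ) * M) * ((n.factorial : ℝ) / (κ / 4) ^ n) with hC₂def
    set C : ℝ := Real.exp ((a + δ) * M) *
      ((‖c₀‖ + δ + m) * (((n+1).factorial : ℝ) / (κ / 4) ^ (n+1))
        + (M + 2 / a) * ((n.factorial : ℝ) / (κ / 4) ^ n)) with hCdef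
    -- bound for `G`
    have hGle : ∀ c ∈ Metric.ball c₀ δ, ∀ s ∈ Ioi (0:ℝ), ‖G c s‖ ≤ C₂ * |f s| := by
      intro c hc s hs
      have hs0 : (0:ℝ) < s := hs
      have e1 := hexpQ c hc s hs
      have e2 : s ^ n * Real.exp (-(κ / 4 * s)) ≤ (n.factorial : ℝ) / (κ / 4) ^ n :=
        fredholm_aux_pow_mul_exp_le n hκ4 hs0.le
      have h5 := mul_le_mul_of_nonneg_right
        (mul_le_mul_of_nonneg_right e1 (pow_nonneg hs0.le n)) (abs_nonneg (f s))
      have h6 := mul_le_mul_of_nonneg_right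
        (mul_le_mul_of_nonneg_left e2 (Real.exp_pos ((a + δ) * M)).le) (abs_nonneg (f s))
      rw [hGnorm c s hs, hC₂def]
      linarith [h5, h6]
    -- bound for `G'`
    have hG'le : ∀ c ∈ Metric.ball c₀ δ, ∀ s ∈ Ioi (0:ℝ), ‖G' c s‖ ≤ C * |f s| := by
      intro c hc s hs
      have hs0 : (0:ℝ) < s := hs
      obtain ⟨h1, h2, h3, h4⟩ := hball c hc
      have hcre : 0 < c.re := by linarith
      have e1 := hexpQ c hc s hs
      have e2 : s ^ n * Real.exp (-(κ / 4 * s)) ≤ (n.factorial : ℝ) / (κ / 4) ^ n :=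
        fredholm_aux_pow_mul_exp_le n hκ4 hs0.le
      have e3 : s ^ (n+1) * Real.exp (-(κ / 4 * s)) ≤ ((n+1).factorial : ℝ) / (κ / 4) ^ (n+1) :=
        fredholm_aux_pow_mul_exp_le (n+1) hκ4 hs0.le
      have hQpos : (0:ℝ) < Real.exp ((a + δ) * M) * Real.exp (-(κ / 4 * s)) := by positivity
      have h2a : (0:ℝ) ≤ 2 / a := div_nonneg (by norm_num) ha0.le
      have hMm : (0:ℝ) ≤ M + m * s := by positivity
      -- bound on the norm of the linear factor
      have hnb : ‖-c * (s : ℂ) + (b s : ℂ)‖ ≤ ‖c‖ * s + |b s| := by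
        have hx := norm_add_le (-c * (s : ℂ)) ((b s : ℂ))
        have hy : ‖-c * (s : ℂ)‖ = ‖c‖ * s := by
          simp [norm_mul, Complex.norm_real, abs_of_pos hs0]
        have hz : ‖((b s : ℝ) : ℂ)‖ = |b s| := by
          simp [Complex.norm_real]
        rw [hy, hz] at hx
        exact hx
      -- bound on `exp * |b s|`
      have hterm2 : Real.exp ((-c ^ 2 * (s : ℂ) / 2 + c * (b s : ℂ)).re) * |b s|
          ≤ ((M + m * s) + 2 / a) * (Real.exp ((a + δ) * M) * Real.exp (-(κ / 4 * s))) := by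
        rcases le_or_gt 0 (b s) with hb0 | hb0
        · have hbs := hgrowth s hs0.le
          have t1 : Real.exp ((-c ^ 2 * (s : ℂ) / 2 + c * (b s : ℂ)).re) * |b s|
              ≤ (Real.exp ((a + δ) * M) * Real.exp (-(κ / 4 * s))) * (M + m * s) := by
            rw [abs_of_nonneg hb0]
            exact mul_le_mul e1 hbs hb0 hQpos.le
          nlinarith [t1, mul_nonneg h2a hQpos.le]
        · have k1 : (-(b s)) * Real.exp (c.re * b s) ≤ 1 / c.re :=
            fredholm_aux_neg_mul_exp_le hcre hb0.le
          have k2 : 1 / c.re ≤ 2 / a := by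
            rw [div_le_div_iff₀ hcre ha0]
            linarith
          have k3 : Real.exp (-(c.re ^ 2 - c.im ^ 2) * s / 2)
              ≤ Real.exp ((a + δ) * M) * Real.exp (-(κ / 4 * s)) := by
            rw [← Real.exp_add]
            apply Real.exp_le_exp.mpr
            have p2 : (κ / 2 + 2 * m * c.re) * s ≤ (c.re ^ 2 - c.im ^ 2) * s :=
              mul_le_mul_of_nonneg_right (by linarith) hs0.le
            have hMa : (0:ℝ) ≤ (a + δ) * M := by positivity
            nlinarith [mul_pos (mul_pos hm hcre) hs0]
          have t2 : Real.exp ((-c ^ 2 * (s : ℂ) / 2 + c * (b s : ℂ)).re) * |b s|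
              = Real.exp (-(c.re ^ 2 - c.im ^ 2) * s / 2)
                * ((-(b s)) * Real.exp (c.re * b s)) := by
            rw [hre, Real.exp_add, abs_of_neg hb0]
            ring
          have t4 : Real.exp (-(c.re ^ 2 - c.im ^ 2) * s / 2)
                * ((-(b s)) * Real.exp (c.re * b s))
              ≤ Real.exp (-(c.re ^ 2 - c.im ^ 2) * s / 2) * (2 / a) :=
            mul_le_mul_of_nonneg_left (k1.trans k2) (Real.exp_pos _).le
          have t5 : Real.exp (-(c.re ^ 2 - c.im ^ 2) * s / 2) * (2 / a)
              ≤ (Real.exp ((a + δ) * M) * Real.exp (-(κ / 4 * s))) * (2 / a) :=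
            mul_le_mul_of_nonneg_right k3 h2a
          rw [t2]
          nlinarith [t4, t5, mul_nonneg hMm hQpos.le]
      -- combine
      have g2 : Real.exp ((-c ^ 2 * (s : ℂ) / 2 + c * (b s : ℂ)).re) * ‖c‖
          ≤ (Real.exp ((a + δ) * M) * Real.exp (-(κ / 4 * s))) * (‖c₀‖ + δ) :=
        mul_le_mul e1 h4 (norm_nonneg c) hQpos.le
      have g3 := mul_le_mul_of_nonneg_right g2 hs0.le
      have g1 : Real.exp ((-c ^ 2 * (s : ℂ) / 2 + c * (b s : ℂ)).re)
            * ‖-c * (s : ℂ) + (b s : ℂ)‖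
          ≤ Real.exp ((-c ^ 2 * (s : ℂ) / 2 + c * (b s : ℂ)).re) * (‖c‖ * s + |b s|) :=
        mul_le_mul_of_nonneg_left hnb (Real.exp_pos _).le
      have g6 : Real.exp ((-c ^ 2 * (s : ℂ) / 2 + c * (b s : ℂ)).re)
            * ‖-c * (s : ℂ) + (b s : ℂ)‖
          ≤ (Real.exp ((a + δ) * M) * Real.exp (-(κ / 4 * s)))
            * ((‖c₀‖ + δ) * s + ((M + m * s) + 2 / a)) := by nlinarith [g1, g3, hterm2]
      have g7 := mul_le_mul_of_nonneg_right
        (mul_le_mul_of_nonneg_right g6 (pow_nonneg hs0.le n)) (abs_nonneg (f s))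
      have geq : (Real.exp ((a + δ) * M) * Real.exp (-(κ / 4 * s)))
            * ((‖c₀‖ + δ) * s + ((M + m * s) + 2 / a)) * s ^ n * |f s|
          = Real.exp ((a + δ) * M) *
              ((‖c₀‖ + δ + m) * (s ^ (n+1) * Real.exp (-(κ / 4 * s)))
                + (M + 2 / a) * (s ^ n * Real.exp (-(κ / 4 * s)))) * |f s| := by
        ring
      rw [geq] at g7
      have c1 : (0:ℝ) ≤ ‖c₀‖ + δ + m := by positivity
      have c2 : (0:ℝ) ≤ M + 2 / a := by positivity
      have g8 := mul_le_mul_of_nonneg_right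
        (mul_le_mul_of_nonneg_left
          (add_le_add (mul_le_mul_of_nonneg_left e3 c1) (mul_le_mul_of_nonneg_left e2 c2))
          (Real.exp_pos ((a + δ) * M)).le) (abs_nonneg (f s))
      rw [hG'norm c s hs, hCdef]
      linarith [g7, g8]
    -- apply the dominated-derivative theorem
    have hself : c₀ ∈ Metric.ball c₀ δ := Metric.mem_ball_self hδpos
    have hF_int : Integrable (G c₀) (volume.restrict (Ioi 0)) := by
      apply Integrable.mono' (hintC C₂) (hGmeas c₀)
      exact (ae_restrict_mem measurableSet_Ioi).mono fun s hs => hGle c₀ hself s hs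
    have h_bound : ∀ᵐ s ∂(volume.restrict (Ioi (0:ℝ))), ∀ c ∈ Metric.ball c₀ δ,
        ‖G' c s‖ ≤ C * |f s| :=
      (ae_restrict_mem measurableSet_Ioi).mono fun s hs c hc => hG'le c hc s hs
    have h_diff : ∀ᵐ s ∂(volume.restrict (Ioi (0:ℝ))), ∀ c ∈ Metric.ball c₀ δ,
        HasDerivAt (fun c => G c s) (G' c s) c :=
      Filter.Eventually.of_forall fun s c _ => hderiv s c
    exact (hasDerivAt_integral_of_dominated_loc_of_deriv_le (Metric.ball_mem_nhds c₀ hδpos)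
      (Filter.Eventually.of_forall fun c => hGmeas c) hF_int (hG'meas c₀)
      h_bound (hintC C) h_diff).2
  -- `Fc` is complex-analytic on `U`
  have hdiffOn : DifferentiableOn ℂ Fc U := fun c hc =>
    ((hkey c hc).differentiableAt).differentiableWithinAt
  have hAn : AnalyticOnNhd ℂ Fc U := hdiffOn.analyticOnNhd hUopen
  -- transfer to the reals
  have hMaps : MapsTo (fun c : ℝ => (c : ℂ)) (Ioi (2 * m + 2)) U := by
    intro c hc
    simp only [mem_Ioi] at hc
    rw [hUdef]
    refine ⟨?_, ?_⟩
    · simp only [Complex.ofReal_re]; linarith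
    · simp only [Complex.ofReal_re, Complex.ofReal_im]
      nlinarith
  have hAnR : AnalyticOnNhd ℝ (fun c : ℝ => (Fc ((c : ℂ))).re) (Ioi (2 * m + 2)) := by
    have h1 : AnalyticOnNhd ℝ Fc U := hAn.restrictScalars
    have h2 : AnalyticOnNhd ℝ (fun c : ℝ => ((c : ℂ))) (Ioi (2 * m + 2)) :=
      Complex.ofRealCLM.analyticOnNhd (Ioi (2 * m + 2))
    have h3 := h1.comp h2 hMaps
    have h4 := (Complex.reCLM.analyticOnNhd (univ : Set ℂ)).comp h3 (mapsTo_univ _ _)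
    exact h4
  have heq : (fun c : ℝ => ∫ s in Ioi (0 : ℝ),
        Real.exp (-c ^ 2 * s / 2 + c * b s) * s ^ n * f s)
      = fun c : ℝ => (Fc ((c : ℂ))).re := by
    funext c
    have hFcr : Fc ((c : ℂ))
        = ((∫ s in Ioi (0 : ℝ), Real.exp (-c ^ 2 * s / 2 + c * b s) * s ^ n * f s : ℝ) : ℂ) := by
      have hint : Fc ((c : ℂ)) = ∫ s in Ioi (0 : ℝ),
          ((Real.exp (-c ^ 2 * s / 2 + c * b s) * s ^ n * f s : ℝ) : ℂ) := by
        simp only [hFcdef]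
        refine integral_congr_ae (Filter.Eventually.of_forall fun s => ?_)
        simp only [hGdef]
        push_cast [Complex.ofReal_exp]
        ring_nf
      rw [hint]
      exact integral_ofReal
    rw [hFcr, Complex.ofReal_re]
  rw [heq]
  exact hAnR
end

section
/- Fix b₀ > 0. If f : (0,∞) → ℝ is continuous, strictly positive and integrable and satisfies 1 = ∫₀^∞ e^{-c²s/2 + c·b₀} f(s) ds for all c > 0, then f(s) = (b₀/√(2π s³)) · e^{-b₀²/(2s)} for all s > 0. -/
open MeasureTheory Real Filter Set

-- φ(t) = t - a/t on (0,∞): image, injectivity, derivative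
lemma phi_image (a : ℝ) (ha : 0 < a) : (fun t : ℝ => t - a / t) '' (Ioi 0) = univ := by
  apply eq_univ_of_forall
  intro u
  have h4a : (0:ℝ) < u ^ 2 + 4 * a := by positivity
  set r := Real.sqrt (u ^ 2 + 4 * a) with hr
  have hrpos : 0 < r := Real.sqrt_pos.2 h4a
  have hru : -u < r := by
    rcases le_or_gt 0 u with hu | hu
    · linarith [hrpos]
    · have : Real.sqrt (u^2) < r := by
        apply Real.sqrt_lt_sqrt (by positivity); linarith
      rwa [Real.sqrt_sq_eq_abs, abs_of_neg hu] at this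
  have hrsq : r ^ 2 = u ^ 2 + 4 * a := Real.sq_sqrt h4a.le
  have ht : (0:ℝ) < (u + r) / 2 := by linarith
  refine ⟨(u + r) / 2, by simpa using ht, ?_⟩
  have hne : u + r ≠ 0 := by intro h; rw [h] at ht; norm_num at ht
  show (u + r) / 2 - a / ((u + r) / 2) = u
  field_simp
  nlinarith [hrsq]

lemma phi_inj (a : ℝ) (ha : 0 < a) : InjOn (fun t : ℝ => t - a / t) (Ioi 0) := by
  have : StrictMonoOn (fun t : ℝ => t - a / t) (Ioi 0) := by
    intro x hx y hy hxy
    have hx0 : (0:ℝ) < x := hx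
    have : a / y < a / x := div_lt_div_of_pos_left ha hx0 hxy
    simp only
    linarith
  exact this.injOn

lemma phi_deriv (a : ℝ) (t : ℝ) (ht : 0 < t) :
    HasDerivWithinAt (fun t : ℝ => t - a / t) (1 + a / t ^ 2) (Ioi 0) t := by
  have h := (hasDerivAt_id t).sub ((hasDerivAt_inv ht.ne').const_mul a)
  simp only [mul_neg] at h
  refine h.hasDerivWithinAt.congr_deriv ?_
  ring


-- ψ(t) = a/t on (0,∞)
lemma inv_image (a : ℝ) (ha : 0 < a) : (fun t : ℝ => a / t) '' (Ioi 0) = Ioi 0 := by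
  ext u
  constructor
  · rintro ⟨t, ht, rfl⟩; exact div_pos ha ht
  · intro hu
    exact ⟨a / u, div_pos ha hu, by field_simp⟩

lemma my_inv_inj (a : ℝ) (ha : 0 < a) : InjOn (fun t : ℝ => a / t) (Ioi 0) := by
  intro x hx y hy h
  simp only at h
  have hx0 : (0:ℝ) < x := hx
  have hy0 : (0:ℝ) < y := hy
  field_simp at h
  exact h.symm

lemma inv_deriv (a t : ℝ) (ht : 0 < t) :
    HasDerivWithinAt (fun t : ℝ => a / t) (-(a / t ^ 2)) (Ioi 0) t := by
  have h := (hasDerivAt_inv ht.ne').const_mul a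
  have e : (fun t : ℝ => a / t) = fun y : ℝ => a * y⁻¹ := by
    funext y; rw [div_eq_mul_inv]
  rw [e]
  refine h.hasDerivWithinAt.congr_deriv ?_
  rw [div_eq_mul_inv]; ring

-- ρ(t) = b²/t² on (0,∞)
lemma sq_image (b : ℝ) (hb : 0 < b) : (fun t : ℝ => b ^ 2 / t ^ 2) '' (Ioi 0) = Ioi 0 := by
  ext u
  constructor
  · rintro ⟨t, ht, rfl⟩
    have ht0 : (0:ℝ) < t := ht
    show (0:ℝ) < b ^ 2 / t ^ 2
    positivity
  · intro hu
    have hu0 : (0:ℝ) < u := hu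
    refine ⟨b / Real.sqrt u, show (0:ℝ) < b / Real.sqrt u by positivity, ?_⟩
    have : Real.sqrt u ^ 2 = u := Real.sq_sqrt (le_of_lt hu)
    simp only [div_pow]
    rw [this]
    field_simp
lemma sq_inj (b : ℝ) (hb : 0 < b) : InjOn (fun t : ℝ => b ^ 2 / t ^ 2) (Ioi 0) := by
  intro x hx y hy h
  simp only at h
  have hx0 : (0:ℝ) < x := hx
  have hy0 : (0:ℝ) < y := hy
  field_simp at h
  nlinarith

lemma sq_deriv (b t : ℝ) (ht : 0 < t) :
    HasDerivWithinAt (fun t : ℝ => b ^ 2 / t ^ 2) (-(2 * b ^ 2 / t ^ 3)) (Ioi 0) t := by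
  have h : HasDerivAt (fun t : ℝ => b ^ 2 / t ^ 2) ((0 * t^2 - b^2 * (2*t))/(t^2)^2) t := by
    exact (hasDerivAt_const t (b^2)).div (by simpa using (hasDerivAt_pow 2 t)) (by positivity)
  refine h.hasDerivWithinAt.congr_deriv ?_
  field_simp
  ring

-- ε(s) = exp(-s) maps (0,∞) onto (0,1)
lemma exp_image : (fun s : ℝ => Real.exp (-s)) '' (Ioi 0) = Ioo 0 1 := by
  ext u
  constructor
  · rintro ⟨s, hs, rfl⟩
    exact ⟨Real.exp_pos _, by rw [Real.exp_lt_one_iff]; linarith [mem_Ioi.1 hs]⟩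
  · rintro ⟨hu0, hu1⟩
    refine ⟨-Real.log u, ?_, by simp [Real.exp_log hu0]⟩
    simp only [mem_Ioi]
    have := Real.log_neg hu0 hu1
    linarith

lemma exp_inj : InjOn (fun s : ℝ => Real.exp (-s)) (Ioi 0) := by
  intro x _ y _ h
  simpa using Real.exp_injective h

lemma exp_deriv' (s : ℝ) :
    HasDerivWithinAt (fun s : ℝ => Real.exp (-s)) (-Real.exp (-s)) (Ioi 0) s := by
  have h := (hasDerivAt_neg s).exp
  simpa using h.hasDerivWithinAt



lemma gauss_half : (∫ x : ℝ, Real.exp (-x ^ 2 / 2)) = Real.sqrt (2 * π) := by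
  have h := integral_gaussian (1/2 : ℝ)
  have e : (fun x : ℝ => Real.exp (-(1/2) * x ^ 2)) = fun x : ℝ => Real.exp (-x ^ 2 / 2) := by
    funext x; ring_nf
  rw [e] at h
  rw [h]
  congr 1
  rw [div_div_eq_mul_div, mul_comm]
  norm_num

lemma schlomilch (a : ℝ) (ha : 0 < a) :
    IntegrableOn (fun t : ℝ => Real.exp (-(t - a / t) ^ 2 / 2)) (Ioi 0) ∧
    (∫ t in Ioi (0:ℝ), Real.exp (-(t - a / t) ^ 2 / 2)) = Real.sqrt (2 * π) / 2 := by
  set e : ℝ → ℝ := fun t => Real.exp (-(t - a / t) ^ 2 / 2) with he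
  have hecont : ContinuousOn e (Ioi 0) := by
    apply Continuous.comp_continuousOn continuous_exp
    apply ContinuousOn.div _ continuousOn_const (by norm_num)
    exact ((continuousOn_id.sub (continuousOn_const.div continuousOn_id
      (fun x hx => ne_of_gt hx))).pow 2).neg
  -- change of variables with φ(t) = t - a/t : J = ∫ (1 + a/t²) e = √(2π)
  have hg : Integrable (fun u : ℝ => Real.exp (-u ^ 2 / 2)) := by
    have := integrable_exp_neg_mul_sq (show (0:ℝ) < 1/2 by norm_num)
    convert this using 2 with x
    ring_nf
  have hJeq : (∫ u : ℝ, Real.exp (-u ^ 2 / 2))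
      = ∫ t in Ioi (0:ℝ), |1 + a / t ^ 2| • Real.exp (-((fun t : ℝ => t - a / t) t) ^ 2 / 2) := by
    rw [← setIntegral_univ, ← phi_image a ha]
    exact integral_image_eq_integral_abs_deriv_smul measurableSet_Ioi
      (fun t ht => phi_deriv a t ht) (phi_inj a ha) (fun u => Real.exp (-u ^ 2 / 2))
  have hJint : IntegrableOn
      (fun t : ℝ => |1 + a / t ^ 2| • Real.exp (-((fun t : ℝ => t - a / t) t) ^ 2 / 2)) (Ioi 0) := by
    have h2 := (integrableOn_image_iff_integrableOn_abs_deriv_smul measurableSet_Ioi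
      (fun t ht => phi_deriv a t ht) (phi_inj a ha) (fun u => Real.exp (-u ^ 2 / 2))).1
      (by rw [phi_image a ha]; exact hg.integrableOn)
    exact h2
  -- this function equals (1 + a/t²) * e t on Ioi 0
  have habs : ∀ t ∈ Ioi (0:ℝ), |1 + a / t ^ 2| = 1 + a / t ^ 2 := by
    intro t ht
    have : (0:ℝ) < t := ht
    rw [abs_of_pos]; positivity
  have hJint' : IntegrableOn (fun t : ℝ => (1 + a / t ^ 2) * e t) (Ioi 0) := by
    apply hJint.congr_fun _ measurableSet_Ioi
    intro t ht
    simp only [smul_eq_mul, habs t ht, he]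
  have hJval : (∫ t in Ioi (0:ℝ), (1 + a / t ^ 2) * e t) = Real.sqrt (2 * π) := by
    rw [← gauss_half, hJeq]
    apply setIntegral_congr_fun measurableSet_Ioi
    intro t ht
    simp only [smul_eq_mul, habs t ht, he]
  -- integrability of e and of (a/t²) e
  have heint : IntegrableOn e (Ioi 0) := by
    apply hJint'.mono' (hecont.aestronglyMeasurable measurableSet_Ioi)
    filter_upwards [ae_restrict_of_forall_mem measurableSet_Ioi
      (fun t (ht : t ∈ Ioi (0:ℝ)) => ht)] with t ht
    have ht0 : (0:ℝ) < t := ht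
    have h1 : (0:ℝ) < 1 + a / t ^ 2 := by positivity
    rw [Real.norm_eq_abs, abs_of_pos (Real.exp_pos _)]
    nlinarith [Real.exp_pos (-(t - a / t) ^ 2 / 2), div_nonneg ha.le (sq_nonneg t)]
  have h2int : IntegrableOn (fun t : ℝ => (a / t ^ 2) * e t) (Ioi 0) := by
    have : (fun t : ℝ => (a / t ^ 2) * e t) = fun t => (1 + a / t ^ 2) * e t - e t := by
      funext t; ring
    rw [this]
    exact hJint'.sub heint
  -- symmetry: ∫ e = ∫ (a/t²) e via t ↦ a/t
  have hsym : (∫ t in Ioi (0:ℝ), e t) = ∫ t in Ioi (0:ℝ), (a / t ^ 2) * e t := by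
    have := integral_image_eq_integral_abs_deriv_smul measurableSet_Ioi
      (fun t ht => inv_deriv a t ht) (my_inv_inj a ha) e
    rw [inv_image a ha] at this
    rw [this]
    apply setIntegral_congr_fun measurableSet_Ioi
    intro t ht
    have ht0 : (0:ℝ) < t := ht
    have hat : (0:ℝ) < a / t := by positivity
    have hat2 : e (a / t) = e t := by
      have h1 : a / (a / t) = t := by field_simp
      show Real.exp (-(a / t - a / (a / t)) ^ 2 / 2) = Real.exp (-(t - a / t) ^ 2 / 2)
      rw [h1]; congr 1; ring
    simp only [smul_eq_mul]
    rw [abs_neg, abs_of_pos (by positivity : (0:ℝ) < a / t ^ 2), hat2]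
  -- combine
  have hsum : Real.sqrt (2 * π) = (∫ t in Ioi (0:ℝ), e t) + ∫ t in Ioi (0:ℝ), (a / t ^ 2) * e t := by
    rw [← hJval, ← integral_add heint h2int]
    apply setIntegral_congr_fun measurableSet_Ioi
    intro t ht; ring
  refine ⟨heint, ?_⟩
  rw [← hsym] at hsum
  linarith



lemma IG_pt (b₀ c t : ℝ) (hb : 0 < b₀) (ht : 0 < t) :
    (2 * b₀ ^ 2 / t ^ 3) * (Real.exp (-c ^ 2 * (b₀ ^ 2 / t ^ 2) / 2 + c * b₀) *
      ((b₀ / Real.sqrt (2 * π * (b₀ ^ 2 / t ^ 2) ^ 3)) * Real.exp (-b₀ ^ 2 / (2 * (b₀ ^ 2 / t ^ 2))))) =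
    (2 / Real.sqrt (2 * π)) * Real.exp (-(t - c * b₀ / t) ^ 2 / 2) := by
  have hsp : (0:ℝ) < Real.sqrt (2 * π) := Real.sqrt_pos.2 (by positivity)
  have h1 : Real.sqrt (2 * π * (b₀ ^ 2 / t ^ 2) ^ 3) = Real.sqrt (2 * π) * (b₀ ^ 3 / t ^ 3) := by
    rw [show (2 * π * (b₀ ^ 2 / t ^ 2) ^ 3 : ℝ) = (2 * π) * (b₀ ^ 3 / t ^ 3) ^ 2 by ring,
      Real.sqrt_mul (by positivity), Real.sqrt_sq (by positivity)]
  have h2 : -b₀ ^ 2 / (2 * (b₀ ^ 2 / t ^ 2)) = -t ^ 2 / 2 := by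
    field_simp
  have hexp : Real.exp (-c ^ 2 * (b₀ ^ 2 / t ^ 2) / 2 + c * b₀) * Real.exp (-t ^ 2 / 2)
      = Real.exp (-(t - c * b₀ / t) ^ 2 / 2) := by
    rw [← Real.exp_add]
    congr 1
    field_simp
    ring
  have hpre : (2 * b₀ ^ 2 / t ^ 3) * (b₀ / (Real.sqrt (2 * π) * (b₀ ^ 3 / t ^ 3)))
      = 2 / Real.sqrt (2 * π) := by
    field_simp
  rw [h1, h2]
  calc (2 * b₀ ^ 2 / t ^ 3) * (Real.exp (-c ^ 2 * (b₀ ^ 2 / t ^ 2) / 2 + c * b₀) *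
        ((b₀ / (Real.sqrt (2 * π) * (b₀ ^ 3 / t ^ 3))) * Real.exp (-t ^ 2 / 2)))
      = ((2 * b₀ ^ 2 / t ^ 3) * (b₀ / (Real.sqrt (2 * π) * (b₀ ^ 3 / t ^ 3)))) *
        (Real.exp (-c ^ 2 * (b₀ ^ 2 / t ^ 2) / 2 + c * b₀) * Real.exp (-t ^ 2 / 2)) := by ring
    _ = (2 / Real.sqrt (2 * π)) * Real.exp (-(t - c * b₀ / t) ^ 2 / 2) := by rw [hexp, hpre]

-- change of variables for the IG-type integrand
lemma IG_cov (b₀ c : ℝ) (hb : 0 < b₀) :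
    (IntegrableOn (fun s => Real.exp (-c ^ 2 * s / 2 + c * b₀) *
        ((b₀ / Real.sqrt (2 * π * s ^ 3)) * Real.exp (-b₀ ^ 2 / (2 * s)))) (Ioi 0) ↔
      IntegrableOn (fun t : ℝ => (2 / Real.sqrt (2 * π)) *
        Real.exp (-(t - c * b₀ / t) ^ 2 / 2)) (Ioi 0)) ∧
    (∫ s in Ioi (0:ℝ), Real.exp (-c ^ 2 * s / 2 + c * b₀) *
        ((b₀ / Real.sqrt (2 * π * s ^ 3)) * Real.exp (-b₀ ^ 2 / (2 * s)))) =
      ∫ t in Ioi (0:ℝ), (2 / Real.sqrt (2 * π)) * Real.exp (-(t - c * b₀ / t) ^ 2 / 2) := by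
  set g : ℝ → ℝ := fun s => Real.exp (-c ^ 2 * s / 2 + c * b₀) *
      ((b₀ / Real.sqrt (2 * π * s ^ 3)) * Real.exp (-b₀ ^ 2 / (2 * s))) with hg
  have hder : ∀ t ∈ Ioi (0:ℝ), HasDerivWithinAt (fun t : ℝ => b₀ ^ 2 / t ^ 2)
      (-(2 * b₀ ^ 2 / t ^ 3)) (Ioi 0) t := fun t ht => sq_deriv b₀ t ht
  have hkey : ∀ t ∈ Ioi (0:ℝ), |(-(2 * b₀ ^ 2 / t ^ 3))| • g ((fun t : ℝ => b₀ ^ 2 / t ^ 2) t)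
      = (2 / Real.sqrt (2 * π)) * Real.exp (-(t - c * b₀ / t) ^ 2 / 2) := by
    intro t ht
    have ht0 : (0:ℝ) < t := ht
    have : |(-(2 * b₀ ^ 2 / t ^ 3))| = 2 * b₀ ^ 2 / t ^ 3 := by
      rw [abs_neg, abs_of_pos (by positivity)]
    rw [smul_eq_mul, this]
    exact IG_pt b₀ c t hb ht0
  have himg := integrableOn_image_iff_integrableOn_abs_deriv_smul measurableSet_Ioi hder
    (sq_inj b₀ hb) g
  have hint := integral_image_eq_integral_abs_deriv_smul measurableSet_Ioi hder
    (sq_inj b₀ hb) g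
  rw [sq_image b₀ hb] at himg hint
  constructor
  · exact himg.trans (integrableOn_congr_fun hkey measurableSet_Ioi)
  · exact hint.trans (setIntegral_congr_fun measurableSet_Ioi hkey)

lemma IG_lap (b₀ c : ℝ) (hb : 0 < b₀) (hc : 0 < c) :
    IntegrableOn (fun s => Real.exp (-c ^ 2 * s / 2 + c * b₀) *
      ((b₀ / Real.sqrt (2 * π * s ^ 3)) * Real.exp (-b₀ ^ 2 / (2 * s)))) (Ioi 0) ∧
    (∫ s in Ioi (0:ℝ), Real.exp (-c ^ 2 * s / 2 + c * b₀) *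
      ((b₀ / Real.sqrt (2 * π * s ^ 3)) * Real.exp (-b₀ ^ 2 / (2 * s)))) = 1 := by
  have hsp : (0:ℝ) < Real.sqrt (2 * π) := Real.sqrt_pos.2 (by positivity)
  have ha : 0 < c * b₀ := mul_pos hc hb
  obtain ⟨hcov1, hcov2⟩ := IG_cov b₀ c hb
  obtain ⟨hs1, hs2⟩ := schlomilch (c * b₀) ha
  constructor
  · exact hcov1.2 (hs1.const_mul _)
  · rw [hcov2, integral_const_mul, hs2]
    field_simp

lemma IG_int (b₀ : ℝ) (hb : 0 < b₀) :
    IntegrableOn (fun s => (b₀ / Real.sqrt (2 * π * s ^ 3)) * Real.exp (-b₀ ^ 2 / (2 * s)))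
      (Ioi 0) := by
  have h := (IG_cov b₀ 0 hb).1
  have e0 : ∀ s : ℝ, Real.exp (-(0:ℝ) ^ 2 * s / 2 + 0 * b₀) = 1 := by intro s; norm_num
  have h2 : IntegrableOn (fun t : ℝ => (2 / Real.sqrt (2 * π)) *
      Real.exp (-(t - 0 * b₀ / t) ^ 2 / 2)) (Ioi 0) := by
    have : Integrable (fun t : ℝ => (2 / Real.sqrt (2 * π)) * Real.exp (-t ^ 2 / 2)) := by
      apply Integrable.const_mul
      have := integrable_exp_neg_mul_sq (show (0:ℝ) < 1/2 by norm_num)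
      convert this using 2 with x
      ring_nf
    apply (this.integrableOn).congr_fun _ measurableSet_Ioi
    intro t ht
    norm_num
  have h3 := h.2 h2
  apply h3.congr_fun _ measurableSet_Ioi
  intro s hs
  simp only [e0, one_mul]


lemma poly_integral_zero (G : ℝ → ℝ)
    (hmon : ∀ n : ℕ, IntegrableOn (fun u => u ^ n * G u) (Ioo 0 1))
    (hmom : ∀ n : ℕ, (∫ u in Ioo (0:ℝ) 1, u ^ n * G u) = 0) (p : Polynomial ℝ) :
    IntegrableOn (fun u => Polynomial.eval u p * G u) (Ioo 0 1) ∧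
    (∫ u in Ioo (0:ℝ) 1, Polynomial.eval u p * G u) = 0 := by
  have hrw : ∀ u : ℝ, Polynomial.eval u p * G u
      = ∑ i ∈ Finset.range (p.natDegree + 1), p.coeff i * (u ^ i * G u) := by
    intro u
    rw [Polynomial.eval_eq_sum_range, Finset.sum_mul]
    congr 1
    funext i
    ring
  have hint : ∀ i ∈ Finset.range (p.natDegree + 1),
      IntegrableOn (fun u => p.coeff i * (u ^ i * G u)) (Ioo 0 1) :=
    fun i _ => (hmon i).const_mul _
  constructor
  · have : IntegrableOn (fun u => ∑ i ∈ Finset.range (p.natDegree + 1),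
        p.coeff i * (u ^ i * G u)) (Ioo 0 1) := integrable_finset_sum _ hint
    exact this.congr_fun (fun u _ => (hrw u).symm) measurableSet_Ioo
  · rw [show (fun u => Polynomial.eval u p * G u) = fun u => ∑ i ∈ Finset.range (p.natDegree + 1),
        p.coeff i * (u ^ i * G u) from funext hrw]
    rw [integral_finset_sum _ hint]
    apply Finset.sum_eq_zero
    intro i _
    rw [integral_const_mul, hmom i, mul_zero]

lemma no_pos_point (G : ℝ → ℝ) (hGc : ContinuousOn G (Ioo 0 1)) (hGi : IntegrableOn G (Ioo 0 1))
    (hmon : ∀ n : ℕ, IntegrableOn (fun u => u ^ n * G u) (Ioo 0 1))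
    (hmom : ∀ n : ℕ, (∫ u in Ioo (0:ℝ) 1, u ^ n * G u) = 0)
    (u₀ : ℝ) (hu₀ : u₀ ∈ Ioo (0:ℝ) 1) (hpos : 0 < G u₀) : False := by
  -- find δ
  have hGat : ContinuousAt G u₀ := hGc.continuousAt (isOpen_Ioo.mem_nhds hu₀)
  obtain ⟨δ₁, hδ₁, hball⟩ := Metric.continuousAt_iff.1 hGat (G u₀ / 2) (by linarith)
  obtain ⟨δ₂, hδ₂, hsub⟩ := Metric.isOpen_iff.1 isOpen_Ioo u₀ hu₀
  set δ := min δ₁ δ₂ / 2 with hδdef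
  have hδ : 0 < δ := by positivity
  have hIccsub : Icc (u₀ - δ) (u₀ + δ) ⊆ Ioo 0 1 := by
    intro u hu
    apply hsub
    rw [Metric.mem_ball, Real.dist_eq]
    have h1 : |u - u₀| ≤ δ := abs_sub_le_iff.2 ⟨by linarith [hu.2], by linarith [hu.1]⟩
    have : δ < δ₂ := by
      have := min_le_right δ₁ δ₂
      rw [hδdef]; linarith
    linarith
  have hGlow : ∀ u ∈ Icc (u₀ - δ) (u₀ + δ), G u₀ / 2 ≤ G u := by
    intro u hu
    have h1 : |u - u₀| ≤ δ := abs_sub_le_iff.2 ⟨by linarith [hu.2], by linarith [hu.1]⟩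
    have h2 : dist u u₀ < δ₁ := by
      rw [Real.dist_eq]
      have := min_le_left δ₁ δ₂
      rw [hδdef] at h1; linarith
    have := hball h2
    rw [Real.dist_eq, abs_sub_lt_iff] at this
    linarith [this.1]
  -- bump function
  set φ : ℝ → ℝ := fun u => max 0 (1 - |u - u₀| / δ) with hφdef
  have hφcont : Continuous φ :=
    continuous_const.max (continuous_const.sub (((continuous_id.sub continuous_const).abs).div_const δ))
  have hφ01 : ∀ u, 0 ≤ φ u ∧ φ u ≤ 1 := by
    intro u
    constructor
    · exact le_max_left _ _
    · apply max_le (by norm_num)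
      have : 0 ≤ |u - u₀| / δ := by positivity
      linarith
  have hφzero : ∀ u, δ ≤ |u - u₀| → φ u = 0 := by
    intro u hu
    apply max_eq_left
    have : 1 ≤ |u - u₀| / δ := (one_le_div hδ).2 hu
    linarith
  have hφhalf : ∀ u, |u - u₀| ≤ δ / 2 → 1 / 2 ≤ φ u := by
    intro u hu
    apply le_max_of_le_right
    have : |u - u₀| / δ ≤ 1 / 2 := by
      rw [div_le_div_iff₀ hδ (by norm_num)]
      linarith
    linarith
  -- G * φ nonneg on Ioo 0 1
  have hGφ_nonneg : ∀ u ∈ Ioo (0:ℝ) 1, 0 ≤ G u * φ u := by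
    intro u hu
    rcases le_or_gt δ (|u - u₀|) with h | h
    · rw [hφzero u h, mul_zero]
    · have hu' : u ∈ Icc (u₀ - δ) (u₀ + δ) := by
        rw [abs_sub_lt_iff] at h
        constructor <;> [linarith [h.2]; linarith [h.1]]
      exact mul_nonneg (le_trans (by linarith) (hGlow u hu')) (hφ01 u).1
  -- integrability of G * φ
  have hGφmeas : AEStronglyMeasurable (fun u => G u * φ u) (volume.restrict (Ioo 0 1)) :=
    (hGi.aestronglyMeasurable).mul (hφcont.aestronglyMeasurable.restrict)
  have hGφint : IntegrableOn (fun u => G u * φ u) (Ioo 0 1) := by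
    apply (hGi.norm).mono' hGφmeas
    filter_upwards [ae_restrict_of_forall_mem measurableSet_Ioo
      (fun u (hu : u ∈ Ioo (0:ℝ) 1) => hu)] with u _
    rw [Real.norm_eq_abs, Real.norm_eq_abs, abs_mul]
    calc |G u| * |φ u| ≤ |G u| * 1 := by
          apply mul_le_mul_of_nonneg_left _ (abs_nonneg _)
          rw [abs_of_nonneg (hφ01 u).1]; exact (hφ01 u).2
      _ = |G u| := mul_one _
  -- lower bound for ∫ G φ
  set L : ℝ := G u₀ / 4 * δ with hLdef
  have hLpos : 0 < L := by positivity
  have hlow : L ≤ ∫ u in Ioo (0:ℝ) 1, G u * φ u := by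
    have hIcc2sub : Icc (u₀ - δ/2) (u₀ + δ/2) ⊆ Ioo 0 1 := by
      intro u hu
      apply hIccsub
      constructor <;> [linarith [hu.1]; linarith [hu.2]]
    have step1 : (∫ u in Icc (u₀ - δ/2) (u₀ + δ/2), G u * φ u)
        ≤ ∫ u in Ioo (0:ℝ) 1, G u * φ u := by
      apply setIntegral_mono_set hGφint
      · filter_upwards [ae_restrict_of_forall_mem measurableSet_Ioo
          (fun u (hu : u ∈ Ioo (0:ℝ) 1) => hu)] with u hu
        exact hGφ_nonneg u hu
      · exact HasSubset.Subset.eventuallyLE hIcc2sub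
    have step2 : L ≤ ∫ u in Icc (u₀ - δ/2) (u₀ + δ/2), G u * φ u := by
      have hvol : (volume (Icc (u₀ - δ/2) (u₀ + δ/2))).toReal = δ := by
        rw [Real.volume_Icc]
        rw [ENNReal.toReal_ofReal (by linarith)]
        ring
      have hptwise : ∀ u ∈ Icc (u₀ - δ/2) (u₀ + δ/2), G u₀ / 4 ≤ G u * φ u := by
        intro u hu
        have huIcc : u ∈ Icc (u₀ - δ) (u₀ + δ) := by
          constructor <;> [linarith [hu.1]; linarith [hu.2]]
        have h1 := hGlow u huIcc
        have h2 := hφhalf u (abs_sub_le_iff.2 ⟨by linarith [hu.2], by linarith [hu.1]⟩)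
        calc G u₀ / 4 = (G u₀ / 2) * (1 / 2) := by ring
          _ ≤ G u * φ u := by
              apply mul_le_mul h1 h2 (by norm_num) (le_trans (by linarith) h1)
      have := setIntegral_ge_of_const_le (c := G u₀ / 4) (measurableSet_Icc :
          MeasurableSet (Icc (u₀ - δ/2) (u₀ + δ/2)))
        (by rw [Real.volume_Icc]; exact ENNReal.ofReal_ne_top)
        hptwise (hGφint.mono_set hIcc2sub)
      rw [measureReal_def, hvol] at this
      calc L = G u₀ / 4 * δ := hLdef
        _ ≤ _ := by rw [smul_eq_mul] at this; linarith
    linarith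
  -- upper bound via Weierstrass
  set M : ℝ := ∫ u in Ioo (0:ℝ) 1, |G u| with hMdef
  have hMnonneg : 0 ≤ M := by
    rw [hMdef]; positivity
  have hub : ∀ ε : ℝ, 0 < ε → (∫ u in Ioo (0:ℝ) 1, G u * φ u) ≤ ε * M := by
    intro ε hε
    -- approximate φ by a polynomial
    set φc : C(Icc (0:ℝ) 1, ℝ) := ⟨fun x => φ x, hφcont.comp continuous_subtype_val⟩ with hφc
    obtain ⟨p, hp⟩ := exists_polynomial_near_continuousMap 0 1 φc ε hε
    have hpclose : ∀ u ∈ Ioo (0:ℝ) 1, |Polynomial.eval u p - φ u| ≤ ε := by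
      intro u hu
      have hu' : u ∈ Icc (0:ℝ) 1 := Ioo_subset_Icc_self hu
      have := ContinuousMap.norm_coe_le_norm (p.toContinuousMapOn (Icc (0:ℝ) 1) - φc) ⟨u, hu'⟩
      have h2 : ((p.toContinuousMapOn (Icc (0:ℝ) 1) - φc) ⟨u, hu'⟩ : ℝ)
          = Polynomial.eval u p - φ u := rfl
      rw [h2, Real.norm_eq_abs] at this
      linarith
    obtain ⟨hpint, hpzero⟩ := poly_integral_zero G hmon hmom p
    have hsplit : (∫ u in Ioo (0:ℝ) 1, G u * φ u)
        = ∫ u in Ioo (0:ℝ) 1, (G u * φ u - Polynomial.eval u p * G u) := by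
      rw [integral_sub hGφint hpint, hpzero, sub_zero]
    rw [hsplit]
    calc (∫ u in Ioo (0:ℝ) 1, (G u * φ u - Polynomial.eval u p * G u))
        ≤ |∫ u in Ioo (0:ℝ) 1, (G u * φ u - Polynomial.eval u p * G u)| := le_abs_self _
      _ ≤ ∫ u in Ioo (0:ℝ) 1, |G u * φ u - Polynomial.eval u p * G u| := by
          rw [← Real.norm_eq_abs]
          have := norm_integral_le_integral_norm
            (fun u => G u * φ u - Polynomial.eval u p * G u)
            (μ := volume.restrict (Ioo (0:ℝ) 1))
          simpa using this
      _ ≤ ∫ u in Ioo (0:ℝ) 1, ε * |G u| := by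
          apply setIntegral_mono_on ((hGφint.sub hpint).norm) ((hGi.norm).const_mul ε)
            measurableSet_Ioo
          intro u hu
          simp only [Pi.sub_apply, Real.norm_eq_abs]
          have : G u * φ u - Polynomial.eval u p * G u = G u * (φ u - Polynomial.eval u p) := by
            ring
          rw [this, abs_mul]
          calc |G u| * |φ u - Polynomial.eval u p| ≤ |G u| * ε := by
                apply mul_le_mul_of_nonneg_left _ (abs_nonneg _)
                rw [abs_sub_comm]
                exact hpclose u hu
            _ = ε * |G u| := mul_comm _ _
      _ = ε * M := by rw [integral_const_mul]
  -- contradiction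
  have hε : (0:ℝ) < L / (2 * (M + 1)) := by positivity
  have := hub _ hε
  have hcontr : L / (2 * (M + 1)) * M < L := by
    rw [div_mul_eq_mul_div, div_lt_iff₀ (by positivity)]
    nlinarith
  linarith



lemma laplace_zero (g : ℝ → ℝ) (hgc : ContinuousOn g (Ioi 0)) (hgi : IntegrableOn g (Ioi 0))
    (hz : ∀ l : ℝ, 0 < l → (∫ s in Ioi (0:ℝ), Real.exp (-(l * s)) * g s) = 0) :
    ∀ s ∈ Ioi (0:ℝ), g s = 0 := by
  set G : ℝ → ℝ := fun u => g (-Real.log u) with hGdef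
  have hmaps : MapsTo (fun u : ℝ => -Real.log u) (Ioo 0 1) (Ioi 0) := by
    intro u hu
    have := Real.log_neg hu.1 hu.2
    simpa using by linarith
  have hGc : ContinuousOn G (Ioo 0 1) := by
    apply hgc.comp _ hmaps
    apply ContinuousOn.neg
    apply Real.continuousOn_log.mono
    intro u hu
    exact ne_of_gt hu.1
  -- transfer integrability
  have hcombo : ∀ s : ℝ, |(-Real.exp (-s))| • G (Real.exp (-s)) = Real.exp (-s) * g s := by
    intro s
    rw [abs_neg, abs_of_pos (Real.exp_pos _), smul_eq_mul, hGdef]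
    simp only [Real.log_exp, neg_neg]
  have hegint : IntegrableOn (fun s : ℝ => Real.exp (-s) * g s) (Ioi 0) := by
    apply (hgi.norm).mono'
    · exact ((Real.continuous_exp.comp continuous_neg).aestronglyMeasurable.restrict).mul
        hgi.aestronglyMeasurable
    · filter_upwards [ae_restrict_of_forall_mem measurableSet_Ioi
        (fun s (hs : s ∈ Ioi (0:ℝ)) => hs)] with s hs
      rw [Real.norm_eq_abs, Real.norm_eq_abs, abs_mul, abs_of_pos (Real.exp_pos _)]
      have h1 : Real.exp (-s) ≤ 1 := Real.exp_le_one_iff.2 (by linarith [mem_Ioi.1 hs])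
      nlinarith [abs_nonneg (g s)]
  have hGi : IntegrableOn G (Ioo 0 1) := by
    rw [← exp_image]
    rw [integrableOn_image_iff_integrableOn_abs_deriv_smul measurableSet_Ioi
      (fun s _ => exp_deriv' s) exp_inj G]
    exact hegint.congr_fun (fun s _ => (hcombo s).symm) measurableSet_Ioi
  -- moments
  have hmon : ∀ n : ℕ, IntegrableOn (fun u => u ^ n * G u) (Ioo 0 1) := by
    intro n
    apply (hGi.norm).mono'
    · exact ((continuous_pow n).aestronglyMeasurable.restrict).mul hGi.aestronglyMeasurable
    · filter_upwards [ae_restrict_of_forall_mem measurableSet_Ioo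
        (fun u (hu : u ∈ Ioo (0:ℝ) 1) => hu)] with u hu
      rw [Real.norm_eq_abs, Real.norm_eq_abs, abs_mul, abs_pow]
      have h1 : |u| ≤ 1 := by
        rw [abs_of_pos hu.1]; exact le_of_lt hu.2
      have h2 : |u| ^ n ≤ 1 := pow_le_one₀ (abs_nonneg u) h1
      nlinarith [abs_nonneg (G u)]
  have hmom : ∀ n : ℕ, (∫ u in Ioo (0:ℝ) 1, u ^ n * G u) = 0 := by
    intro n
    have hcov := integral_image_eq_integral_abs_deriv_smul measurableSet_Ioi
      (fun s _ => exp_deriv' s) exp_inj (fun u => u ^ n * G u)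
    rw [exp_image] at hcov
    rw [hcov]
    have hptw : ∀ s ∈ Ioi (0:ℝ), |(-Real.exp (-s))| • ((Real.exp (-s)) ^ n * G (Real.exp (-s)))
        = Real.exp (-(((n : ℝ) + 1) * s)) * g s := by
      intro s _
      rw [abs_neg, abs_of_pos (Real.exp_pos _), smul_eq_mul, hGdef]
      simp only [Real.log_exp, neg_neg]
      rw [← Real.exp_nat_mul, ← mul_assoc, ← Real.exp_add]
      congr 2
      ring
    rw [setIntegral_congr_fun measurableSet_Ioi hptw]
    exact hz ((n : ℝ) + 1) (by positivity)
  -- conclude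
  intro s hs
  by_contra hne
  have hu₀ : Real.exp (-s) ∈ Ioo (0:ℝ) 1 := by
    constructor
    · exact Real.exp_pos _
    · rw [Real.exp_lt_one_iff]; simpa using mem_Ioi.1 hs
  have hGu₀ : G (Real.exp (-s)) = g s := by
    rw [hGdef]; simp only [Real.log_exp, neg_neg]
  rcases lt_or_gt_of_ne hne with hlt | hgt
  · -- g s < 0 : apply to -G
    apply no_pos_point (fun u => -G u) hGc.neg hGi.neg
      (fun n => IntegrableOn.congr_fun ((hmon n).neg)
        (fun u _ => by simp only [Pi.neg_apply]; ring) measurableSet_Ioo)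
      (fun n => ?_) (Real.exp (-s)) hu₀
      (by show 0 < -G (Real.exp (-s)); rw [hGu₀]; linarith)
    have : (∫ u in Ioo (0:ℝ) 1, u ^ n * (-G u)) = -∫ u in Ioo (0:ℝ) 1, u ^ n * G u := by
      rw [← integral_neg]
      congr 1
      funext u
      ring
    rw [this, hmom n, neg_zero]
  · exact no_pos_point G hGc hGi hmon hmom (Real.exp (-s)) hu₀ (by rw [hGu₀]; linarith)

/-- Uniqueness for the constant boundary `b(t) ≡ b₀`: any continuous, strictly positive,
integrable solution of `1 = ∫₀^∞ e^{-c²s/2 + c b₀} f(s) ds` (for all `c > 0`) is the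
inverse Gaussian density `f(s) = (b₀/√(2πs³)) e^{-b₀²/(2s)}`. -/
theorem constant_boundary_density_unique (b₀ : ℝ) (hb : 0 < b₀) (f : ℝ → ℝ)
    (hfc : ContinuousOn f (Ioi 0)) (hfpos : ∀ s > (0 : ℝ), 0 < f s)
    (hfint : IntegrableOn f (Ioi 0))
    (heq : ∀ c > (0 : ℝ),
      IntegrableOn (fun s => Real.exp (-c ^ 2 * s / 2 + c * b₀) * f s) (Ioi 0) ∧
      (∫ s in Ioi (0 : ℝ), Real.exp (-c ^ 2 * s / 2 + c * b₀) * f s) = 1) :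
    ∀ s > (0 : ℝ),
      f s = (b₀ / Real.sqrt (2 * Real.pi * s ^ 3)) * Real.exp (-b₀ ^ 2 / (2 * s)) := by
  intro s₀ hs₀
  set IG : ℝ → ℝ := fun s => (b₀ / Real.sqrt (2 * π * s ^ 3)) * Real.exp (-b₀ ^ 2 / (2 * s))
    with hIGdef
  have hIGc : ContinuousOn IG (Ioi 0) := by
    apply ContinuousOn.mul
    · apply ContinuousOn.div continuousOn_const
      · exact Real.continuous_sqrt.comp_continuousOn (by fun_prop)
      · intro s hs
        have hs0 : (0:ℝ) < s := hs
        have : (0:ℝ) < 2 * π * s ^ 3 := by positivity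
        positivity
    · apply Real.continuous_exp.comp_continuousOn
      apply ContinuousOn.div continuousOn_const (by fun_prop)
      intro s hs
      have hs0 : (0:ℝ) < s := hs
      positivity
  set g : ℝ → ℝ := fun s => f s - IG s with hgdef
  have hgc : ContinuousOn g (Ioi 0) := hfc.sub hIGc
  have hgi : IntegrableOn g (Ioi 0) := hfint.sub (IG_int b₀ hb)
  have hz : ∀ l : ℝ, 0 < l → (∫ s in Ioi (0:ℝ), Real.exp (-(l * s)) * g s) = 0 := by
    intro l hl
    set c : ℝ := Real.sqrt (2 * l) with hcdef
    have hc : 0 < c := Real.sqrt_pos.2 (by linarith)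
    have hc2 : c ^ 2 = 2 * l := Real.sq_sqrt (by linarith)
    obtain ⟨hfint1, hfval1⟩ := heq c hc
    obtain ⟨hIGint1, hIGval1⟩ := IG_lap b₀ c hb hc
    have hkey : ∀ s : ℝ, Real.exp (-(l * s)) * g s
        = Real.exp (-(c * b₀)) * (Real.exp (-c ^ 2 * s / 2 + c * b₀) * f s
          - Real.exp (-c ^ 2 * s / 2 + c * b₀) * IG s) := by
      intro s
      have h1 : Real.exp (-(c * b₀)) * Real.exp (-c ^ 2 * s / 2 + c * b₀)
          = Real.exp (-(l * s)) := by
        rw [← Real.exp_add]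
        congr 1
        rw [hc2]
        ring
      calc Real.exp (-(l * s)) * g s
          = Real.exp (-(l * s)) * f s - Real.exp (-(l * s)) * IG s := by rw [hgdef]; ring
        _ = (Real.exp (-(c * b₀)) * Real.exp (-c ^ 2 * s / 2 + c * b₀)) * f s
            - (Real.exp (-(c * b₀)) * Real.exp (-c ^ 2 * s / 2 + c * b₀)) * IG s := by rw [h1]
        _ = _ := by ring
    rw [show (fun s : ℝ => Real.exp (-(l * s)) * g s) = fun s : ℝ =>
        Real.exp (-(c * b₀)) * (Real.exp (-c ^ 2 * s / 2 + c * b₀) * f s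
          - Real.exp (-c ^ 2 * s / 2 + c * b₀) * IG s) from funext hkey]
    rw [integral_const_mul, integral_sub hfint1 hIGint1, hfval1]
    rw [show (fun s : ℝ => Real.exp (-c ^ 2 * s / 2 + c * b₀) * IG s) = fun s : ℝ =>
        Real.exp (-c ^ 2 * s / 2 + c * b₀) *
          ((b₀ / Real.sqrt (2 * π * s ^ 3)) * Real.exp (-b₀ ^ 2 / (2 * s))) from rfl] at hIGval1
    rw [hIGval1]
    simp
  have := laplace_zero g hgc hgi hz s₀ hs₀
  have : f s₀ - IG s₀ = 0 := this
  have h2 : IG s₀ = (b₀ / Real.sqrt (2 * π * s₀ ^ 3)) * Real.exp (-b₀ ^ 2 / (2 * s₀)) := rfl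
  rw [show (b₀ / Real.sqrt (2 * Real.pi * s₀ ^ 3)) * Real.exp (-b₀ ^ 2 / (2 * s₀))
      = IG s₀ from h2.symm]
  linarith
end

section
/- Let b : [0,∞) → ℝ be continuously differentiable with linear growth (there exist M, m > 0 with b(t) ≤ M + m·t for all t ≥ 0), let f : [0,∞) → ℝ be continuous, integrable and strictly positive on (0,∞), and fix t ≥ 0, ε > 0, n ∈ ℕ. Then lim_{c→∞} [∫_{t+ε}^∞ e^{-c²s/2 + c·b(s)} sⁿ f(s) ds] / [∫_t^{t+ε} e^{-c²s/2 + c·b(s)} sⁿ f(s) ds] = 0. -/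
open MeasureTheory Real Filter Set

set_option maxHeartbeats 1000000 in
/-- For a continuously differentiable boundary `b` with linear growth and a continuous,
integrable, strictly positive density `f`, the ratio
`I^f_{[t+ε,∞)}(n)(c) / I^f_{[t,t+ε]}(n)(c)` tends to `0` as `c → ∞`. -/
theorem tail_ratio_tendsto_zero (b f : ℝ → ℝ) (M m t ε : ℝ) (n : ℕ)
    (hb : ContDiffOn ℝ 1 b (Ici 0))
    (hM : 0 < M) (hm : 0 < m) (hgrowth : ∀ s ≥ (0 : ℝ), b s ≤ M + m * s)
    (hfc : ContinuousOn f (Ici 0)) (hfint : IntegrableOn f (Ici 0))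
    (hfpos : ∀ s > (0 : ℝ), 0 < f s)
    (ht : 0 ≤ t) (hε : 0 < ε) :
    Tendsto (fun c =>
        (∫ s in Ici (t + ε), Real.exp (-c ^ 2 * s / 2 + c * b s) * s ^ n * f s) /
        (∫ s in Icc t (t + ε), Real.exp (-c ^ 2 * s / 2 + c * b s) * s ^ n * f s))
      atTop (nhds 0) := by
  have hbc : ContinuousOn b (Ici 0) := hb.continuousOn
  set u := t + ε with hu
  have hu0 : 0 < u := by positivity
  set K : Set ℝ := Icc (t + ε/4) (t + ε/2) with hK
  have hKne : K.Nonempty := ⟨t + ε/4, by constructor <;> simp <;> linarith⟩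
  have hKsub0 : K ⊆ Ici 0 := fun s hs => by
    simp only [hK, mem_Icc] at hs; simp only [mem_Ici]; linarith [hs.1]
  have hKsubI : K ⊆ Icc t u := fun s hs => by
    simp only [hK, mem_Icc] at hs ⊢; constructor <;> [linarith [hs.1]; linarith [hs.2]]
  have hIsub0 : Icc t u ⊆ Ici 0 := fun s hs => by
    simp only [mem_Icc] at hs; simp only [mem_Ici]; linarith [hs.1]
  -- f is nonnegative on [0, ∞)
  have hfnn : ∀ s ∈ Ici (0:ℝ), 0 ≤ f s := by
    intro s hs
    rcases eq_or_lt_of_le (mem_Ici.1 hs) with h | h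
    · subst h
      refine ge_of_tendsto ((hfc 0 (mem_Ici.2 le_rfl)).mono (Ioi_subset_Ici le_rfl)) ?_
      exact eventually_mem_nhdsWithin.mono fun x hx => (hfpos x hx).le
    · exact (hfpos s h).le
  -- lower bound of b on K
  obtain ⟨x₀, hx₀K, hx₀⟩ := isCompact_Icc.exists_isMinOn hKne (hbc.mono hKsub0)
  set B := b x₀ with hB
  -- lower bound of s^n * f s on K
  have hφc : ContinuousOn (fun s : ℝ => s ^ n * f s) K :=
    (continuous_pow n).continuousOn.mul (hfc.mono hKsub0)
  obtain ⟨y₀, hy₀K, hy₀⟩ := isCompact_Icc.exists_isMinOn hKne hφc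
  set δ := y₀ ^ n * f y₀ with hδdef
  have hy₀pos : 0 < y₀ := by
    have := (hKsub0 hy₀K); have h2 := hy₀K.1; linarith
  have hδ : 0 < δ := mul_pos (pow_pos hy₀pos n) (hfpos y₀ hy₀pos)
  set F := ∫ s in Ici u, f s with hF
  have hFnn : 0 ≤ F :=
    setIntegral_nonneg measurableSet_Ici (fun s hs => hfnn s (le_trans hu0.le hs))
  -- the bounding functions
  set Nb : ℝ → ℝ := fun c => (n.factorial : ℝ) * Real.exp (c*M + c*m*u + u - c^2*u/2) * F with hNb
  set Db : ℝ → ℝ := fun c => (ε/4) * (δ * Real.exp (c*B - c^2*(t+ε/2)/2)) with hDb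
  have hDbpos : ∀ c, 0 < Db c := fun c => by
    simp only [hDb]; positivity
  -- integrand continuity on Icc t u
  have hgc : ∀ c : ℝ, ContinuousOn
      (fun s => Real.exp (-c ^ 2 * s / 2 + c * b s) * s ^ n * f s) (Icc t u) := by
    intro c
    have h1 : ContinuousOn (fun s : ℝ => -c ^ 2 * s / 2 + c * b s) (Icc t u) :=
      (((continuous_const.mul continuous_id).div_const 2).continuousOn).add
        (continuous_const.continuousOn.mul (hbc.mono hIsub0))
    exact ((h1.rexp.mul (continuous_pow n).continuousOn)).mul (hfc.mono hIsub0)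
  -- numerator is nonnegative
  have hNumnn : ∀ c : ℝ,
      0 ≤ ∫ s in Ici u, Real.exp (-c ^ 2 * s / 2 + c * b s) * s ^ n * f s := by
    intro c
    refine setIntegral_nonneg measurableSet_Ici fun s hs => ?_
    have hs0 : (0:ℝ) ≤ s := le_trans hu0.le hs
    have := hfnn s hs0
    positivity
  -- numerator upper bound, for c ≥ 2*m+2
  have hNum : ∀ c : ℝ, 2*m+2 ≤ c →
      (∫ s in Ici u, Real.exp (-c ^ 2 * s / 2 + c * b s) * s ^ n * f s) ≤ Nb c := by
    intro c hc
    have hc0 : (0:ℝ) ≤ c := by linarith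
    have hptwise : ∀ s ∈ Ici u,
        Real.exp (-c ^ 2 * s / 2 + c * b s) * s ^ n * f s
          ≤ (n.factorial : ℝ) * Real.exp (c*M + c*m*u + u - c^2*u/2) * f s := by
      intro s hs
      have hsu : u ≤ s := hs
      have hs0 : (0:ℝ) ≤ s := le_trans hu0.le hsu
      have hfs : 0 ≤ f s := hfnn s hs0
      have hbs : b s ≤ M + m * s := hgrowth s hs0
      have hpow : s ^ n ≤ (n.factorial : ℝ) * Real.exp s := by
        have h0 : s ^ n / (n.factorial : ℝ) ≤ Real.exp s :=
          Real.pow_div_factorial_le_exp s hs0 n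
        rw [div_le_iff₀ (by positivity : (0:ℝ) < (n.factorial : ℝ))] at h0
        linarith [h0]
      have hexp1 : Real.exp (-c ^ 2 * s / 2 + c * b s)
          ≤ Real.exp (-c ^ 2 * s / 2 + c * (M + m * s)) := by
        apply Real.exp_le_exp.2
        have := mul_le_mul_of_nonneg_left hbs hc0
        linarith
      have hE : -c ^ 2 * s / 2 + c * (M + m * s) + s ≤ c*M + c*m*u + u - c^2*u/2 := by
        have hkey : c * m + 1 ≤ c^2 / 2 := by nlinarith
        nlinarith [mul_le_mul_of_nonneg_right hkey (by linarith : (0:ℝ) ≤ s - u)]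
      calc Real.exp (-c ^ 2 * s / 2 + c * b s) * s ^ n * f s
          ≤ Real.exp (-c ^ 2 * s / 2 + c * (M + m * s)) * ((n.factorial : ℝ) * Real.exp s) * f s := by
            apply mul_le_mul_of_nonneg_right _ hfs
            exact mul_le_mul hexp1 hpow (by positivity) (Real.exp_pos _).le
        _ = (n.factorial : ℝ) * (Real.exp (-c ^ 2 * s / 2 + c * (M + m * s)) * Real.exp s) * f s := by
            ring
        _ = (n.factorial : ℝ) * Real.exp (-c ^ 2 * s / 2 + c * (M + m * s) + s) * f s := by
            rw [← Real.exp_add]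
        _ ≤ (n.factorial : ℝ) * Real.exp (c*M + c*m*u + u - c^2*u/2) * f s := by
            apply mul_le_mul_of_nonneg_right _ hfs
            exact mul_le_mul_of_nonneg_left (Real.exp_le_exp.2 hE) (by positivity)
    have hgint : Integrable (fun s => (n.factorial : ℝ) * Real.exp (c*M + c*m*u + u - c^2*u/2) * f s)
        (volume.restrict (Ici u)) :=
      ((hfint.mono_set (Ici_subset_Ici.2 hu0.le)).const_mul _)
    calc (∫ s in Ici u, Real.exp (-c ^ 2 * s / 2 + c * b s) * s ^ n * f s)
        ≤ ∫ s in Ici u, (n.factorial : ℝ) * Real.exp (c*M + c*m*u + u - c^2*u/2) * f s := by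
          refine integral_mono_of_nonneg ?_ hgint ?_
          · filter_upwards [ae_restrict_mem measurableSet_Ici] with s hs
            have hs0 : (0:ℝ) ≤ s := le_trans hu0.le hs
            have := hfnn s hs0; positivity
          · filter_upwards [ae_restrict_mem measurableSet_Ici] with s hs
            exact hptwise s hs
      _ = Nb c := by rw [integral_const_mul]
  -- denominator lower bound, for c ≥ 0
  have hDen : ∀ c : ℝ, 0 ≤ c →
      Db c ≤ ∫ s in Icc t u, Real.exp (-c ^ 2 * s / 2 + c * b s) * s ^ n * f s := by
    intro c hc0
    have hgint : IntegrableOn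
        (fun s => Real.exp (-c ^ 2 * s / 2 + c * b s) * s ^ n * f s) (Icc t u) :=
      (hgc c).integrableOn_compact isCompact_Icc
    have hnn : ∀ s ∈ Icc t u,
        0 ≤ Real.exp (-c ^ 2 * s / 2 + c * b s) * s ^ n * f s := by
      intro s hs
      have hs0 : (0:ℝ) ≤ s := hIsub0 hs
      have := hfnn s (hIsub0 hs); positivity
    have hptwise : ∀ s ∈ K,
        δ * Real.exp (c*B - c^2*(t+ε/2)/2)
          ≤ Real.exp (-c ^ 2 * s / 2 + c * b s) * s ^ n * f s := by
      intro s hsK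
      have hsI := hKsubI hsK
      have hsm : s ≤ t + ε/2 := (hsK.2 : s ≤ t + ε/2)
      have hexp : Real.exp (c*B - c^2*(t+ε/2)/2) ≤ Real.exp (-c ^ 2 * s / 2 + c * b s) := by
        apply Real.exp_le_exp.2
        have h1 : c * B ≤ c * b s := mul_le_mul_of_nonneg_left (hx₀ hsK) hc0
        have h2 : -c ^ 2 * s / 2 + c^2*(t+ε/2)/2 ≥ 0 := by nlinarith [sq_nonneg c]
        linarith
      have hφ : δ ≤ s ^ n * f s := hy₀ hsK
      calc δ * Real.exp (c*B - c^2*(t+ε/2)/2)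
          ≤ (s ^ n * f s) * Real.exp (-c ^ 2 * s / 2 + c * b s) :=
            mul_le_mul hφ hexp (Real.exp_pos _).le
              (le_trans hδ.le hφ)
        _ = Real.exp (-c ^ 2 * s / 2 + c * b s) * s ^ n * f s := by ring
    calc Db c
        = ∫ _ in K, δ * Real.exp (c*B - c^2*(t+ε/2)/2) := by
          rw [setIntegral_const, hK, measureReal_def, Real.volume_Icc, smul_eq_mul]
          rw [ENNReal.toReal_ofReal (by linarith : (0:ℝ) ≤ t + ε/2 - (t + ε/4))]
          simp only [hDb]; ring
      _ ≤ ∫ s in K, Real.exp (-c ^ 2 * s / 2 + c * b s) * s ^ n * f s := by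
          refine setIntegral_mono_on (integrableOn_const ?_)
            (hgint.mono_set hKsubI) measurableSet_Icc (fun s hs => hptwise s hs)
          rw [hK, Real.volume_Icc]; exact ENNReal.ofReal_ne_top
      _ ≤ ∫ s in Icc t u, Real.exp (-c ^ 2 * s / 2 + c * b s) * s ^ n * f s := by
          refine setIntegral_mono_set hgint ?_ (HasSubset.Subset.eventuallyLE hKsubI)
          filter_upwards [ae_restrict_mem measurableSet_Icc] with s hs
          exact hnn s hs
  -- the bounding ratio tends to zero
  set Cst : ℝ := (n.factorial : ℝ) * F / ((ε/4) * δ) with hCst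
  set E : ℝ → ℝ := fun c => (c*M + c*m*u + u - c^2*u/2) - (c*B - c^2*(t+ε/2)/2) with hE
  have hEq : ∀ c, Nb c / Db c = Cst * Real.exp (E c) := by
    intro c
    have hδ0 : δ ≠ 0 := hδ.ne'
    have hε0 : ε ≠ 0 := hε.ne'
    simp only [hNb, hDb, hCst, hE, Real.exp_sub]
    field_simp
  have hEbot : Tendsto E atTop atBot := by
    have hE2 : ∀ c, E c = c * (M + m*u - B) + u - c^2*(ε/4) := by
      intro c; simp only [hE, hu]; ring
    have hbound : ∀ᶠ c in atTop, E c ≤ u - c := by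
      filter_upwards [eventually_ge_atTop (max 0 ((M + m*u - B + 1) * (4/ε)))] with c hc
      have hc0 : (0:ℝ) ≤ c := le_trans (le_max_left _ _) hc
      have hc1 : (M + m*u - B + 1) * (4/ε) ≤ c := le_trans (le_max_right _ _) hc
      have hc2 : M + m*u - B + 1 ≤ c * (ε/4) := by
        have h := mul_le_mul_of_nonneg_right hc1 (by positivity : (0:ℝ) ≤ ε/4)
        have heq : (M + m*u - B + 1) * (4/ε) * (ε/4) = M + m*u - B + 1 := by
          field_simp
        rw [heq] at h; exact h
      rw [hE2]
      nlinarith [mul_le_mul_of_nonneg_left hc2 hc0]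
    refine tendsto_atBot_mono' atTop hbound ?_
    exact tendsto_atBot_add_const_left atTop u tendsto_neg_atTop_atBot
  have hTendH : Tendsto (fun c => Cst * Real.exp (E c)) atTop (nhds 0) := by
    have h1 : Tendsto (fun c => Real.exp (E c)) atTop (nhds 0) :=
      Real.tendsto_exp_atBot.comp hEbot
    have h2 := h1.const_mul Cst
    rw [mul_zero] at h2
    exact h2
  -- squeeze
  refine tendsto_of_tendsto_of_tendsto_of_le_of_le' tendsto_const_nhds hTendH ?_ ?_
  · filter_upwards [eventually_ge_atTop (2*m+2)] with c hc
    have hc0 : (0:ℝ) ≤ c := by linarith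
    exact div_nonneg (hNumnn c) (le_trans (hDbpos c).le (hDen c hc0))
  · filter_upwards [eventually_ge_atTop (2*m+2)] with c hc
    have hc0 : (0:ℝ) ≤ c := by linarith
    rw [← hEq c]
    refine div_le_div₀ ?_ (hNum c hc) (hDbpos c) (hDen c hc0)
    simp only [hNb]; positivity
end
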